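/- arXiv:1312.0060 — 6 statements merged into one kernel-verified Lean document; each statement's English description precedes it below -/
import Mathlib

section
/- Let (H_m, H_z) be a pair of nonnegative real random variables and let H_e be a nonnegative real random variable, and let P_t, P_j ≥ 0 be constants. Define the effective main channel gain H* := H_m/(1 + P_j·H_z). Suppose the cdfs of H* and of H_e are continuous and H_e stochastically dominates H*, i.e. F_{H_e}(a) ≤ F_{H*}(a) for all a. Then there exists a probability space carrying random variables (H̃_m, H̃_e, H̃_z) such that (H̃_m, H̃_z) has the same joint law as (H_m, H_z), H̃_e has the same law as H_e, and E[ max( ln(1 + P_t·H̃_m/(1 + P_j·H̃_z)) − ln(1 + P_t·H̃_e), 0 ) ] = 0. -/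
open MeasureTheory Set Filter

namespace StochDomRemark1

variable {α : Type*} [MeasurableSpace α]

lemma cdf_nonneg (μ : Measure α) (X : α → ℝ) (F : ℝ → ℝ)
    (hF : ∀ a, F a = (μ {ω | X ω ≤ a}).toReal) (a : ℝ) : 0 ≤ F a := by
  rw [hF]; exact ENNReal.toReal_nonneg

lemma cdf_mono (μ : Measure α) [IsProbabilityMeasure μ] (X : α → ℝ) (F : ℝ → ℝ)
    (hF : ∀ a, F a = (μ {ω | X ω ≤ a}).toReal) : Monotone F := by
  intro a b hab
  rw [hF a, hF b]
  exact ENNReal.toReal_mono (measure_ne_top μ _)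
    (measure_mono fun ω h => le_trans h hab)

lemma cdf_le_one (μ : Measure α) [IsProbabilityMeasure μ] (X : α → ℝ) (F : ℝ → ℝ)
    (hF : ∀ a, F a = (μ {ω | X ω ≤ a}).toReal) (a : ℝ) : F a ≤ 1 := by
  rw [hF a]
  have h1 : (μ {ω | X ω ≤ a}).toReal ≤ (μ (univ : Set α)).toReal :=
    ENNReal.toReal_mono (measure_ne_top μ _) (measure_mono (subset_univ _))
  simpa using h1

lemma cdf_ofReal (μ : Measure α) [IsProbabilityMeasure μ] (X : α → ℝ) (F : ℝ → ℝ)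
    (hF : ∀ a, F a = (μ {ω | X ω ≤ a}).toReal) (a : ℝ) :
    μ {ω | X ω ≤ a} = ENNReal.ofReal (F a) := by
  rw [hF, ENNReal.ofReal_toReal (measure_ne_top μ _)]

lemma cdf_exists_gt (μ : Measure α) [IsProbabilityMeasure μ] (X : α → ℝ) (F : ℝ → ℝ)
    (hXm : Measurable X) (hF : ∀ a, F a = (μ {ω | X ω ≤ a}).toReal) :
    ∀ t, t < 1 → ∃ x, t < F x := by
  intro t ht
  rcases lt_or_ge t 0 with h | h
  · exact ⟨0, lt_of_lt_of_le h (cdf_nonneg μ X F hF 0)⟩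
  · have hmono : Monotone (fun n : ℕ => {ω | X ω ≤ (n : ℝ)}) := by
      intro m n hmn ω hω
      have : (m : ℝ) ≤ (n : ℝ) := Nat.cast_le.mpr hmn
      exact le_trans hω this
    have hun : (⋃ n : ℕ, {ω | X ω ≤ (n : ℝ)}) = univ := by
      ext ω
      simp only [mem_iUnion, mem_univ, iff_true, mem_setOf_eq]
      exact exists_nat_ge (X ω)
    have htend := tendsto_measure_iUnion_atTop (μ := μ) hmono
    rw [hun, measure_univ] at htend
    have hlt : ENNReal.ofReal t < 1 := by
      rw [← ENNReal.ofReal_one]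
      exact ENNReal.ofReal_lt_ofReal_iff_of_nonneg h |>.mpr ht
    have hev : ∀ᶠ n : ℕ in atTop, ENNReal.ofReal t < μ {ω | X ω ≤ (n : ℝ)} :=
      htend.eventually_const_lt hlt
    obtain ⟨n, hn⟩ := hev.exists
    refine ⟨n, ?_⟩
    rw [hF]
    exact (ENNReal.ofReal_lt_iff_lt_toReal h (measure_ne_top μ _)).mp hn

lemma cdf_Ioc (μ : Measure α) [IsProbabilityMeasure μ] (X : α → ℝ) (F : ℝ → ℝ)
    (hXm : Measurable X) (hF : ∀ a, F a = (μ {ω | X ω ≤ a}).toReal)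
    {q m : ℝ} (hqm : q ≤ m) :
    (μ {ω | q < X ω ∧ X ω ≤ m}).toReal = F m - F q := by
  have hset : {ω | q < X ω ∧ X ω ≤ m} = {ω | X ω ≤ m} \ {ω | X ω ≤ q} := by
    ext ω
    simp only [mem_setOf_eq, mem_diff, not_le]
    tauto
  have hsub : {ω | X ω ≤ q} ⊆ {ω | X ω ≤ m} := fun ω h => le_trans h hqm
  rw [hset, measure_diff hsub (hXm measurableSet_Iic).nullMeasurableSet (measure_ne_top μ _),
    ENNReal.toReal_sub_of_le (measure_mono hsub) (measure_ne_top μ _), hF, hF]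


lemma cdf_flat_null (μ : Measure α) [IsProbabilityMeasure μ] (X : α → ℝ) (F : ℝ → ℝ)
    (hXm : Measurable X) (hF : ∀ a, F a = (μ {ω | X ω ≤ a}).toReal)
    (hFc : Continuous F) (q : ℝ) :
    μ {ω | q < X ω ∧ F (X ω) = F q} = 0 := by
  set T : Set ℝ := {x | q < x ∧ F x = F q} with hT
  rcases T.eq_empty_or_nonempty with hTe | hTne
  · have : {ω | q < X ω ∧ F (X ω) = F q} = ∅ := by
      ext ω
      simp only [mem_setOf_eq, mem_empty_iff_false, iff_false, not_and]
      intro h1 h2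
      exact eq_empty_iff_forall_notMem.mp hTe (X ω) ⟨h1, h2⟩
    rw [this, measure_empty]
  by_cases hbdd : BddAbove T
  · set m := sSup T with hm
    obtain ⟨x0, hx0⟩ := hTne
    have hqm : q ≤ m := le_of_lt (lt_of_lt_of_le hx0.1 (le_csSup hbdd hx0))
    have h1 : F m ≤ F q := by
      have key : ∀ n : ℕ, F (m - 1 / (n + 1)) ≤ F q := by
        intro n
        have hpos : (0 : ℝ) < 1 / (n + 1) := by positivity
        obtain ⟨x, hxT, hxgt⟩ := exists_lt_of_lt_csSup ⟨x0, hx0⟩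
          (show m - 1 / (n + 1) < m by linarith)
        calc F (m - 1 / (n + 1)) ≤ F x := cdf_mono μ X F hF (le_of_lt hxgt)
          _ = F q := hxT.2
      have h1' : Tendsto (fun n : ℕ => m - 1 / ((n : ℝ) + 1)) atTop (nhds m) := by
        have := tendsto_one_div_add_atTop_nhds_zero_nat (𝕜 := ℝ)
        have h2' := tendsto_const_nhds (x := m) (f := atTop (α := ℕ)) |>.sub this
        simpa using h2'
      have htend : Tendsto (fun n : ℕ => F (m - 1 / ((n : ℝ) + 1))) atTop (nhds (F m)) :=
        ((hFc.tendsto m).comp h1')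
      exact le_of_tendsto htend (Eventually.of_forall key)
    have h2 : F q ≤ F m := by
      calc F q = F x0 := hx0.2.symm
        _ ≤ F m := cdf_mono μ X F hF (le_csSup hbdd hx0)
    have hFqm : F m = F q := le_antisymm h1 h2
    have hsub : {ω | q < X ω ∧ F (X ω) = F q} ⊆ {ω | q < X ω ∧ X ω ≤ m} :=
      fun ω h => ⟨h.1, le_csSup hbdd ⟨h.1, h.2⟩⟩
    refine measure_mono_null hsub ?_
    have h3 : (μ {ω | q < X ω ∧ X ω ≤ m}).toReal = F m - F q :=
      cdf_Ioc μ X F hXm hF hqm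
    rw [hFqm, sub_self] at h3
    rcases (ENNReal.toReal_eq_zero_iff _).mp h3 with h | h
    · exact h
    · exact absurd h (measure_ne_top μ _)
  · have hFq : F q = 1 := by
      refine le_antisymm (cdf_le_one μ X F hF q) ?_
      by_contra hlt
      push_neg at hlt
      obtain ⟨x', hx'⟩ := cdf_exists_gt μ X F hXm hF (F q) hlt
      obtain ⟨x, hxT, hxgt⟩ := not_bddAbove_iff.mp hbdd x'
      have : F x' ≤ F x := cdf_mono μ X F hF (le_of_lt hxgt)
      rw [hxT.2] at this
      linarith
    have hsub2 : {ω | q < X ω ∧ F (X ω) = F q} ⊆ {ω | q < X ω} := fun ω h => h.1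
    refine measure_mono_null hsub2 ?_
    have hset : {ω | q < X ω} = univ \ {ω | X ω ≤ q} := by
      ext ω; simp [not_le]
    rw [hset, measure_diff (subset_univ _)
      (show NullMeasurableSet {ω | X ω ≤ q} μ from (hXm measurableSet_Iic).nullMeasurableSet)
      (measure_ne_top μ _)]
    rw [cdf_ofReal μ X F hF q, hFq, ENNReal.ofReal_one, measure_univ, tsub_self]

lemma cdf_atom_null (μ : Measure α) [IsProbabilityMeasure μ] (X : α → ℝ) (F : ℝ → ℝ)
    (hXm : Measurable X) (hF : ∀ a, F a = (μ {ω | X ω ≤ a}).toReal)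
    (hFc : Continuous F) (c : ℝ) :
    μ {ω | X ω = c} = 0 := by
  have key : ∀ n : ℕ, (μ {ω | X ω = c}).toReal ≤ F c - F (c - 1 / (n + 1)) := by
    intro n
    have hpos : (0 : ℝ) < 1 / ((n : ℝ) + 1) := by positivity
    have hsub : {ω | X ω = c} ⊆ {ω | c - 1 / (n + 1) < X ω ∧ X ω ≤ c} := by
      intro ω h
      simp only [mem_setOf_eq] at h ⊢
      constructor <;> [linarith [h]; linarith [h]]
    have hle := ENNReal.toReal_mono (measure_ne_top μ _) (measure_mono hsub)
    rw [cdf_Ioc μ X F hXm hF (show c - 1 / ((n : ℝ) + 1) ≤ c by linarith)] at hle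
    exact hle
  have h1' : Tendsto (fun n : ℕ => c - 1 / ((n : ℝ) + 1)) atTop (nhds c) := by
    have := tendsto_one_div_add_atTop_nhds_zero_nat (𝕜 := ℝ)
    have h2' := tendsto_const_nhds (x := c) (f := atTop (α := ℕ)) |>.sub this
    simpa using h2'
  have htend : Tendsto (fun n : ℕ => F c - F (c - 1 / ((n : ℝ) + 1))) atTop (nhds 0) := by
    have h2 := ((hFc.tendsto c).comp h1')
    have h3 := tendsto_const_nhds (x := F c) (f := atTop (α := ℕ)) |>.sub h2
    simpa using h3
  have hle : (μ {ω | X ω = c}).toReal ≤ 0 := ge_of_tendsto htend (Eventually.of_forall key)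
  have h0 : (μ {ω | X ω = c}).toReal = 0 := le_antisymm hle ENNReal.toReal_nonneg
  rcases (ENNReal.toReal_eq_zero_iff _).mp h0 with h | h
  · exact h
  · exact absurd h (measure_ne_top μ _)

lemma cdf_flatone_null (μ : Measure α) [IsProbabilityMeasure μ] (X : α → ℝ) (F : ℝ → ℝ)
    (hXm : Measurable X) (hF : ∀ a, F a = (μ {ω | X ω ≤ a}).toReal)
    (hFc : Continuous F) (hFneg : F (-1) = 0) :
    μ {ω | F (X ω) = 1} = 0 := by
  set W : Set ℝ := {x | F x = 1} with hW
  rcases W.eq_empty_or_nonempty with hWe | hWne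
  · have : {ω | F (X ω) = 1} = ∅ := by
      ext ω
      simp only [mem_setOf_eq, mem_empty_iff_false, iff_false]
      exact fun h => eq_empty_iff_forall_notMem.mp hWe (X ω) h
    rw [this, measure_empty]
  · have hWb : BddBelow W := by
      refine ⟨-1, fun x hx => ?_⟩
      by_contra hxx
      push_neg at hxx
      have h1 : F x ≤ F (-1) := cdf_mono μ X F hF (le_of_lt hxx)
      rw [hx, hFneg] at h1
      linarith
    have hWc : IsClosed W := by
      have : W = F ⁻¹' {1} := rfl
      rw [this]
      exact IsClosed.preimage hFc isClosed_singleton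
    have hbW : sInf W ∈ W := hWc.csInf_mem hWne hWb
    have hsub : {ω | F (X ω) = 1} ⊆
        {ω | X ω = sInf W} ∪ {ω | sInf W < X ω ∧ F (X ω) = F (sInf W)} := by
      intro ω h
      have hmem : X ω ∈ W := h
      rcases eq_or_lt_of_le (csInf_le hWb hmem) with he | hl
      · exact Or.inl he.symm
      · refine Or.inr ⟨hl, ?_⟩
        have h2 : F (sInf W) = 1 := hbW
        rw [h2]
        exact h
    exact measure_mono_null hsub (measure_union_null
      (cdf_atom_null μ X F hXm hF hFc _) (cdf_flat_null μ X F hXm hF hFc _))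

lemma cdf_uniform (μ : Measure α) [IsProbabilityMeasure μ] (X : α → ℝ) (F : ℝ → ℝ)
    (hXm : Measurable X) (hF : ∀ a, F a = (μ {ω | X ω ≤ a}).toReal)
    (hFc : Continuous F) (hFneg : F (-1) = 0) {t : ℝ} (ht0 : 0 ≤ t) (ht1 : t ≤ 1) :
    (μ {ω | F (X ω) ≤ t}).toReal = t := by
  rcases eq_or_lt_of_le ht1 with h1 | h1
  · have : {ω | F (X ω) ≤ t} = univ := by
      ext ω
      simp only [mem_setOf_eq, mem_univ, iff_true]
      rw [h1]
      exact cdf_le_one μ X F hF _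
    rw [this, measure_univ]
    rw [h1]
    simp
  · set s : Set ℝ := {x | F x ≤ t} with hs
    have hs1 : (-1 : ℝ) ∈ s := by
      show F (-1) ≤ t
      rw [hFneg]; exact ht0
    have hsne : s.Nonempty := ⟨-1, hs1⟩
    have hsb : BddAbove s := by
      obtain ⟨x1, hx1⟩ := cdf_exists_gt μ X F hXm hF t h1
      refine ⟨x1, fun x hx => ?_⟩
      by_contra hc
      push_neg at hc
      have h2 : F x1 ≤ F x := cdf_mono μ X F hF (le_of_lt hc)
      have h3 : F x ≤ t := hx
      linarith
    set c := sSup s with hc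
    have h1' : ∀ (y : ℝ), Tendsto (fun n : ℕ => y - 1 / ((n : ℝ) + 1)) atTop (nhds y) := by
      intro y
      have := tendsto_one_div_add_atTop_nhds_zero_nat (𝕜 := ℝ)
      have h2' := tendsto_const_nhds (x := y) (f := atTop (α := ℕ)) |>.sub this
      simpa using h2'
    have hFc_le : F c ≤ t := by
      have key : ∀ n : ℕ, F (c - 1 / ((n : ℝ) + 1)) ≤ t := by
        intro n
        have hpos : (0 : ℝ) < 1 / ((n : ℝ) + 1) := by positivity
        obtain ⟨x, hxs, hxgt⟩ := exists_lt_of_lt_csSup hsne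
          (show c - 1 / ((n : ℝ) + 1) < c by linarith)
        calc F (c - 1 / ((n : ℝ) + 1)) ≤ F x := cdf_mono μ X F hF (le_of_lt hxgt)
          _ ≤ t := hxs
      exact le_of_tendsto ((hFc.tendsto c).comp (h1' c)) (Eventually.of_forall key)
    have hFc_ge : t ≤ F c := by
      have key : ∀ n : ℕ, t ≤ F (c + 1 / ((n : ℝ) + 1)) := by
        intro n
        have hpos : (0 : ℝ) < 1 / ((n : ℝ) + 1) := by positivity
        by_contra hc'
        push_neg at hc'
        have hmem : c + 1 / ((n : ℝ) + 1) ∈ s := le_of_lt hc'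
        have := le_csSup hsb hmem
        linarith
      have h2' : Tendsto (fun n : ℕ => c + 1 / ((n : ℝ) + 1)) atTop (nhds c) := by
        have := tendsto_one_div_add_atTop_nhds_zero_nat (𝕜 := ℝ)
        have h3' := tendsto_const_nhds (x := c) (f := atTop (α := ℕ)) |>.add this
        simpa using h3'
      exact ge_of_tendsto ((hFc.tendsto c).comp h2') (Eventually.of_forall key)
    have hFct : F c = t := le_antisymm hFc_le hFc_ge
    have hset : {ω | F (X ω) ≤ t} = {ω | X ω ≤ c} := by
      ext ω
      simp only [mem_setOf_eq]
      constructor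
      · intro h
        exact le_csSup hsb h
      · intro h
        calc F (X ω) ≤ F c := cdf_mono μ X F hF h
          _ = t := hFct
    rw [hset, ← hF c, hFct]

end StochDomRemark1

open StochDomRemark1

/-- Remark 1 of the paper: if the eavesdropper gain `H_e` stochastically dominates the
effective main channel gain `H* = H_m / (1 + P_j H_z)` (both with continuous cdfs), then
there is a coupling `(H̃_m, H̃_e, H̃_z)` with `(H̃_m, H̃_z) ~ (H_m, H_z)` and `H̃_e ~ H_e`
for which the secrecy-capacity upper bound
`E[(ln(1 + P_t H̃_m/(1 + P_j H̃_z)) − ln(1 + P_t H̃_e))⁺]` is zero. -/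
theorem stochDom_coupling_upper_bound_zero
    {Ω Ω' : Type*} [MeasurableSpace Ω] [MeasurableSpace Ω']
    (μ : Measure Ω) (ν : Measure Ω') [IsProbabilityMeasure μ] [IsProbabilityMeasure ν]
    (Hm Hz : Ω → ℝ) (He : Ω' → ℝ)
    (hHm : Measurable Hm) (hHz : Measurable Hz) (hHe : Measurable He)
    (hm0 : ∀ ω, 0 ≤ Hm ω) (hz0 : ∀ ω, 0 ≤ Hz ω) (he0 : ∀ ω', 0 ≤ He ω')
    (Pt Pj : ℝ) (hPt : 0 ≤ Pt) (hPj : 0 ≤ Pj)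
    (Fstar Fe : ℝ → ℝ)
    (hFstar : ∀ a, Fstar a = (μ {ω | Hm ω / (1 + Pj * Hz ω) ≤ a}).toReal)
    (hFe : ∀ a, Fe a = (ν {ω' | He ω' ≤ a}).toReal)
    (hFstarc : Continuous Fstar) (hFec : Continuous Fe)
    (hdom : ∀ a, Fe a ≤ Fstar a) :
    ∃ (Ω'' : Type) (m : MeasurableSpace Ω'') (ρ : Measure Ω''),
      IsProbabilityMeasure ρ ∧
      ∃ Hm' He' Hz' : Ω'' → ℝ,
        Measurable Hm' ∧ Measurable He' ∧ Measurable Hz' ∧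
        ρ.map (fun ω => (Hm' ω, Hz' ω)) = μ.map (fun ω => (Hm ω, Hz ω)) ∧
        ρ.map He' = ν.map He ∧
        ∫ ω, max (Real.log (1 + Pt * Hm' ω / (1 + Pj * Hz' ω))
                  - Real.log (1 + Pt * He' ω)) 0 ∂ρ = 0 := by
  classical
  -- the effective main channel gain on the canonical space ℝ × ℝ
  set Hstar : ℝ × ℝ → ℝ := fun p => p.1 / (1 + Pj * p.2) with hHstar_def
  have hHstarm : Measurable Hstar :=
    measurable_fst.div (measurable_const.add (measurable_const.mul measurable_snd))
  set T : Ω → ℝ × ℝ := fun ω => (Hm ω, Hz ω) with hT_def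
  have hTm : Measurable T := hHm.prodMk hHz
  set ρ : Measure (ℝ × ℝ) := μ.map T with hρ_def
  haveI hρP : IsProbabilityMeasure ρ := Measure.isProbabilityMeasure_map hTm.aemeasurable
  have hρ_app : ∀ s : Set (ℝ × ℝ), MeasurableSet s → ρ s = μ (T ⁻¹' s) :=
    fun s hs => Measure.map_apply hTm hs
  -- Fstar is the cdf of Hstar under ρ
  have hFstar' : ∀ a, Fstar a = (ρ {p | Hstar p ≤ a}).toReal := by
    intro a
    rw [hρ_app {p | Hstar p ≤ a} (hHstarm measurableSet_Iic)]
    exact hFstar a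
  -- positivity facts
  have hden : ∀ z : ℝ, 0 ≤ z → (0 : ℝ) < 1 + Pj * z := by
    intro z hz
    nlinarith [mul_nonneg hPj hz]
  have hFstarneg : Fstar (-1) = 0 := by
    rw [hFstar]
    have : {ω | Hm ω / (1 + Pj * Hz ω) ≤ (-1 : ℝ)} = ∅ := by
      ext ω
      simp only [mem_setOf_eq, mem_empty_iff_false, iff_false, not_le]
      have h1 : 0 ≤ Hm ω / (1 + Pj * Hz ω) := div_nonneg (hm0 ω) (hden _ (hz0 ω)).le
      linarith
    rw [this, measure_empty]
    simp
  have hFe_negzero : ∀ y : ℝ, y < 0 → Fe y = 0 := by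
    intro y hy
    rw [hFe]
    have : {ω' | He ω' ≤ y} = ∅ := by
      ext ω'
      simp only [mem_setOf_eq, mem_empty_iff_false, iff_false, not_le]
      exact lt_of_lt_of_le hy (he0 ω')
    rw [this, measure_empty]
    simp
  -- basic cdf facts
  have hFe_mono := cdf_mono ν He Fe hFe
  have hFe_nonneg := cdf_nonneg ν He Fe hFe
  have hFe_le_one := cdf_le_one ν He Fe hFe
  have hFe_gt := cdf_exists_gt ν He Fe hHe hFe
  have hFstar_mono := cdf_mono ρ Hstar Fstar hFstar'
  have hFstar_nonneg := cdf_nonneg ρ Hstar Fstar hFstar'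
  have hFstar_le_one := cdf_le_one ρ Hstar Fstar hFstar'
  -- the (right-continuous) quantile function of Fe
  set Q : ℝ → ℝ := fun u => sInf {y | u ≤ Fe y} with hQ_def
  have hS_nb : ∀ u : ℝ, u ≤ 0 → ¬ BddBelow {y | u ≤ Fe y} := by
    intro u hu
    rintro ⟨b, hb⟩
    have hneg : min b 0 - 1 < 0 := by
      have := min_le_right b 0; linarith
    have hmem : min b 0 - 1 ∈ {y | u ≤ Fe y} := by
      show u ≤ Fe (min b 0 - 1)
      rw [hFe_negzero _ hneg]; exact hu
    have h1 := hb hmem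
    have h2 := min_le_left b 0
    linarith
  have hQ_zero : ∀ u : ℝ, u ≤ 0 → Q u = 0 :=
    fun u hu => Real.sInf_of_not_bddBelow (hS_nb u hu)
  have hS_bdd : ∀ u : ℝ, 0 < u → BddBelow {y | u ≤ Fe y} := by
    intro u hu
    refine ⟨0, fun y hy => ?_⟩
    by_contra hc
    push_neg at hc
    have := hFe_negzero y hc
    simp only [mem_setOf_eq] at hy
    rw [this] at hy
    linarith
  have hS_closed : ∀ u : ℝ, IsClosed {y | u ≤ Fe y} :=
    fun u => isClosed_le continuous_const hFec
  have hS_ne : ∀ u : ℝ, u < 1 → Set.Nonempty {y | u ≤ Fe y} := by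
    intro u hu
    obtain ⟨x, hx⟩ := hFe_gt u hu
    exact ⟨x, hx.le⟩
  have hQ_mem : ∀ u : ℝ, 0 < u → u < 1 → u ≤ Fe (Q u) :=
    fun u h0 h1 => (hS_closed u).csInf_mem (hS_ne u h1) (hS_bdd u h0)
  have hQ_le_iff : ∀ u a : ℝ, 0 < u → u < 1 → (Q u ≤ a ↔ u ≤ Fe a) := by
    intro u a h0 h1
    constructor
    · intro h
      exact le_trans (hQ_mem u h0 h1) (hFe_mono h)
    · intro h
      exact csInf_le (hS_bdd u h0) h
  have hQ_nonneg : ∀ u, 0 ≤ Q u := by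
    intro u
    rcases le_or_gt u 0 with h | h
    · rw [hQ_zero u h]
    · rcases eq_empty_or_nonempty {y | u ≤ Fe y} with he | hne
      · rw [hQ_def]
        simp only
        rw [he, Real.sInf_empty]
      · refine le_csInf hne (fun y hy => ?_)
        by_contra hc
        push_neg at hc
        simp only [mem_setOf_eq] at hy
        rw [hFe_negzero y hc] at hy
        linarith
  -- measurability of Q
  set E : Set ℝ := {u | ∀ y, Fe y < u} with hE_def
  have hE_upper : ∀ u u' : ℝ, u ∈ E → u ≤ u' → u' ∈ E :=
    fun u u' hu huu' y => lt_of_lt_of_le (hu y) huu'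
  have hE_meas : MeasurableSet E := by
    by_cases hne : E.Nonempty
    · by_cases hbdd : BddBelow E
      · by_cases hbE : sInf E ∈ E
        · have : E = Ici (sInf E) := by
            ext x
            exact ⟨fun hx => csInf_le hbdd hx, fun hx => hE_upper _ x hbE hx⟩
          rw [this]; exact measurableSet_Ici
        · have : E = Ioi (sInf E) := by
            ext x
            constructor
            · intro hx
              rcases eq_or_lt_of_le (csInf_le hbdd hx) with he | hl
              · exact absurd (he ▸ hx) hbE
              · exact hl
            · intro hx
              obtain ⟨e, heE, helt⟩ := exists_lt_of_csInf_lt hne hx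
              exact hE_upper e x heE helt.le
          rw [this]; exact measurableSet_Ioi
      · have : E = univ := by
          ext x
          simp only [mem_univ, iff_true]
          obtain ⟨e, heE, helt⟩ := not_bddBelow_iff.mp hbdd x
          exact hE_upper e x heE helt.le
        rw [this]; exact MeasurableSet.univ
    · rw [not_nonempty_iff_eq_empty.mp hne]; exact MeasurableSet.empty
  have hQ_meas : Measurable Q := by
    apply measurable_of_Iic
    intro a
    rcases lt_or_ge a 0 with ha | ha
    · have : Q ⁻¹' Iic a = ∅ := by
        ext u
        simp only [mem_preimage, mem_Iic, mem_empty_iff_false, iff_false, not_le]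
        exact lt_of_lt_of_le ha (hQ_nonneg u)
      rw [this]; exact MeasurableSet.empty
    · have : Q ⁻¹' Iic a = Iic (Fe a) ∪ E := by
        ext u
        simp only [mem_preimage, mem_Iic, mem_union, hE_def, mem_setOf_eq]
        constructor
        · intro h
          rcases le_or_gt u 0 with hu | hu
          · exact Or.inl (le_trans hu (hFe_nonneg a))
          · by_cases hEu : ∀ y, Fe y < u
            · exact Or.inr hEu
            · push_neg at hEu
              have hmem : u ≤ Fe (Q u) := (hS_closed u).csInf_mem hEu (hS_bdd u hu)
              exact Or.inl (le_trans hmem (hFe_mono h))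
        · intro h
          rcases h with h | h
          · rcases le_or_gt u 0 with hu | hu
            · rw [hQ_zero u hu]; exact ha
            · exact csInf_le (hS_bdd u hu) h
          · have hemp : {y | u ≤ Fe y} = ∅ :=
              eq_empty_iff_forall_notMem.mpr (fun y hy => absurd hy (not_le.mpr (h y)))
            show Q u ≤ a
            rw [hQ_def]
            simp only
            rw [hemp, Real.sInf_empty]
            exact ha
      rw [this]; exact measurableSet_Iic.union hE_meas
  -- the coupled eavesdropper gain
  set He' : ℝ × ℝ → ℝ := fun p => Q (Fstar (Hstar p)) with hHe'_def
  have hHe'm : Measurable He' := hQ_meas.comp (hFstarc.measurable.comp hHstarm)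
  -- null set where Fstar ∘ Hstar = 1
  have hZ : ρ {p | Fstar (Hstar p) = 1} = 0 :=
    cdf_flatone_null ρ Hstar Fstar hHstarm hFstar' hFstarc hFstarneg
  -- law of He'
  have hlaw : ∀ a : ℝ, ρ {p | He' p ≤ a} = ν {ω' | He ω' ≤ a} := by
    intro a
    rcases lt_or_ge a 0 with ha | ha
    · have h1 : {p : ℝ × ℝ | He' p ≤ a} = ∅ := by
        ext p
        simp only [mem_setOf_eq, mem_empty_iff_false, iff_false, not_le]
        exact lt_of_lt_of_le ha (hQ_nonneg _)
      have h2 : {ω' | He ω' ≤ a} = ∅ := by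
        ext ω'
        simp only [mem_setOf_eq, mem_empty_iff_false, iff_false, not_le]
        exact lt_of_lt_of_le ha (he0 ω')
      rw [h1, h2, measure_empty, measure_empty]
    · have h2 : ρ {p | He' p ≤ a} = ρ {p | Fstar (Hstar p) ≤ Fe a} := by
        apply measure_congr
        rw [ae_eq_set]
        have key : ∀ p : ℝ × ℝ, Fstar (Hstar p) ≠ 1 → (He' p ≤ a ↔ Fstar (Hstar p) ≤ Fe a) := by
          intro p hz
          have hu1 : Fstar (Hstar p) < 1 := lt_of_le_of_ne (hFstar_le_one _) hz
          have hu0 : 0 ≤ Fstar (Hstar p) := hFstar_nonneg _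
          rcases eq_or_lt_of_le hu0 with h0 | h0
          · constructor
            · intro _
              rw [← h0]
              exact hFe_nonneg a
            · intro _
              show Q (Fstar (Hstar p)) ≤ a
              rw [hQ_zero _ (le_of_eq h0.symm)]
              exact ha
          · exact hQ_le_iff _ a h0 hu1
        constructor
        · refine measure_mono_null ?_ hZ
          intro p hp
          simp only [mem_diff, mem_setOf_eq] at hp
          by_contra hc
          simp only [mem_setOf_eq] at hc
          exact hp.2 ((key p hc).mp hp.1)
        · refine measure_mono_null ?_ hZ
          intro p hp
          simp only [mem_diff, mem_setOf_eq] at hp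
          by_contra hc
          simp only [mem_setOf_eq] at hc
          exact hp.2 ((key p hc).mpr hp.1)
      rw [h2]
      have h3 : (ρ {p | Fstar (Hstar p) ≤ Fe a}).toReal = Fe a :=
        cdf_uniform ρ Hstar Fstar hHstarm hFstar' hFstarc hFstarneg
          (hFe_nonneg a) (hFe_le_one a)
      rw [← ENNReal.ofReal_toReal (measure_ne_top ρ {p | Fstar (Hstar p) ≤ Fe a}), h3,
        ← ENNReal.ofReal_toReal (measure_ne_top ν {ω' | He ω' ≤ a}), ← hFe a]
  -- null bad sets for the pointwise comparison
  have hBadQ : ∀ q : ℚ, ρ {p | (q : ℝ) < Hstar p ∧ Fstar (Hstar p) = Fstar q} = 0 :=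
    fun q => cdf_flat_null ρ Hstar Fstar hHstarm hFstar' hFstarc q
  have hG : ρ {p : ℝ × ℝ | p.1 < 0 ∨ p.2 < 0} = 0 := by
    have hms : MeasurableSet {p : ℝ × ℝ | p.1 < 0 ∨ p.2 < 0} := by
      have hms2 : {p : ℝ × ℝ | p.1 < 0 ∨ p.2 < 0}
          = {p : ℝ × ℝ | p.1 < 0} ∪ {p : ℝ × ℝ | p.2 < 0} := rfl
      rw [hms2]
      exact (measurableSet_lt measurable_fst measurable_const).union
        (measurableSet_lt measurable_snd measurable_const)
    rw [hρ_app _ hms]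
    have : T ⁻¹' {p : ℝ × ℝ | p.1 < 0 ∨ p.2 < 0} = ∅ := by
      ext ω
      simp only [mem_preimage, mem_setOf_eq, mem_empty_iff_false, iff_false, not_or, not_lt]
      exact ⟨hm0 ω, hz0 ω⟩
    rw [this, measure_empty]
  -- almost everywhere, Hstar ≤ He' and coordinates are nonnegative
  have hae : ∀ᵐ p ∂ρ, (0 ≤ p.1 ∧ 0 ≤ p.2) ∧ Hstar p ≤ He' p := by
    have hnull : ρ ({p | Fstar (Hstar p) = 1} ∪ ({p : ℝ × ℝ | p.1 < 0 ∨ p.2 < 0} ∪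
        ⋃ q : ℚ, {p | (q : ℝ) < Hstar p ∧ Fstar (Hstar p) = Fstar q})) = 0 :=
      measure_union_null hZ (measure_union_null hG (measure_iUnion_null fun q => hBadQ q))
    have hae' := measure_eq_zero_iff_ae_notMem.mp hnull
    filter_upwards [hae'] with p hp
    simp only [mem_union, mem_iUnion, mem_setOf_eq, not_or, not_exists, not_and, not_lt] at hp
    obtain ⟨hp1, ⟨hp2a, hp2b⟩, hp3⟩ := hp
    refine ⟨⟨hp2a, hp2b⟩, ?_⟩
    have hx0 : 0 ≤ Hstar p := div_nonneg hp2a (hden _ hp2b).le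
    by_contra hc
    push_neg at hc
    have hu0 : 0 ≤ Fstar (Hstar p) := hFstar_nonneg _
    rcases eq_or_lt_of_le hu0 with h0 | h0
    · -- Fstar (Hstar p) = 0
      have hQ0 : He' p = 0 := by
        show Q (Fstar (Hstar p)) = 0
        exact hQ_zero _ (le_of_eq h0.symm)
      rw [hQ0] at hc
      obtain ⟨q, hq1, hq2⟩ := exists_rat_btwn (show Hstar p - 1 < Hstar p by linarith)
      refine absurd ?_ (by simpa using (hp3 q hq2 : _))
      · -- Fstar (Hstar p) = Fstar q
        have ha1 : Fstar (q : ℝ) ≤ Fstar (Hstar p) := hFstar_mono hq2.le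
        have ha2 : 0 ≤ Fstar (q : ℝ) := hFstar_nonneg _
        rw [← h0] at ha1 ⊢
        exact le_antisymm ha1 ha2 |>.symm ▸ rfl
    · have hu_lt : Fstar (Hstar p) < 1 := lt_of_le_of_ne (hFstar_le_one _) hp1
      have hy : Fstar (Hstar p) ≤ Fe (Q (Fstar (Hstar p))) := hQ_mem _ h0 hu_lt
      have hchain : Fstar (Hstar p) ≤ Fstar (Q (Fstar (Hstar p))) :=
        le_trans hy (hdom _)
      obtain ⟨q, hq1, hq2⟩ := exists_rat_btwn (show He' p < Hstar p from hc)
      have h1 : Fstar (q : ℝ) ≤ Fstar (Hstar p) := hFstar_mono hq2.le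
      have h2 : Fstar (Q (Fstar (Hstar p))) ≤ Fstar (q : ℝ) := hFstar_mono hq1.le
      exact (hp3 q hq2) (le_antisymm h1 (le_trans hchain h2)).symm
  -- conclusion
  refine ⟨ℝ × ℝ, inferInstance, ρ, hρP, (fun p => p.1), He', (fun p => p.2),
    measurable_fst, hHe'm, measurable_snd, ?_, ?_, ?_⟩
  · have hid : (fun p : ℝ × ℝ => (p.1, p.2)) = id := rfl
    rw [hid, Measure.map_id, hρ_def, hT_def]
  · haveI : IsProbabilityMeasure (ρ.map He') :=
      Measure.isProbabilityMeasure_map hHe'm.aemeasurable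
    refine MeasureTheory.Measure.ext_of_Iic (ρ.map He') (ν.map He) fun a => ?_
    rw [Measure.map_apply hHe'm measurableSet_Iic, Measure.map_apply hHe measurableSet_Iic]
    exact hlaw a
  · apply integral_eq_zero_of_ae
    filter_upwards [hae] with p hp
    obtain ⟨⟨hp1, hp2⟩, hle⟩ := hp
    have hdenp : (0 : ℝ) < 1 + Pj * p.2 := hden _ hp2
    have hx0 : 0 ≤ Hstar p := div_nonneg hp1 hdenp.le
    have hxx : Pt * p.1 / (1 + Pj * p.2) = Pt * Hstar p := mul_div_assoc _ _ _
    have h1 : (0 : ℝ) < 1 + Pt * Hstar p := by nlinarith [mul_nonneg hPt hx0]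
    have h2 : 1 + Pt * Hstar p ≤ 1 + Pt * He' p := by
      have := mul_le_mul_of_nonneg_left hle hPt
      linarith
    have hlog : Real.log (1 + Pt * Hstar p) ≤ Real.log (1 + Pt * He' p) :=
      Real.log_le_log h1 h2
    show max (Real.log (1 + Pt * p.1 / (1 + Pj * p.2)) - Real.log (1 + Pt * He' p)) 0 = 0
    rw [hxx, max_eq_right (sub_nonpos.mpr hlog)]
end

section
/- Let P_t, P_j : (0,∞) → (0,∞) be continuous functions with lim_{P→∞} P_t(P) = ∞, lim_{P→∞} P_j(P) = ∞, and suppose there exist constants B < ∞ and p_0 such that P_t(P) ≤ B·P_j(P) for all P > p_0. Let (H_m, H_e, H_z) be nonnegative random variables with E[H_m] < ∞ and E[H_z] < ∞, with H_e > 0 almost surely and H_z > 0 almost surely, and with H_z having a Lebesgue density bounded above by a constant A < ∞. Then lim_{P→∞} E[ max( ln(1 + P_t(P)·H_m/(1 + P_j(P)·H_z)) − ln(1 + P_t(P)·H_e), 0 ) ] = 0. -/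
open MeasureTheory Filter Set
open scoped ENNReal

lemma log_chain {B m z t j : ℝ} (hB : 0 < B) (hm : 0 ≤ m) (hz : 0 < z)
    (ht : 0 < t) (hj : 0 < j) (htj : t ≤ B * j) :
    Real.log (1 + t * m / (1 + j * z)) ≤ Real.log (1 + B * m / z) := by
  have h1 : (0:ℝ) < 1 + j * z := by positivity
  have key : t * m / (1 + j * z) ≤ B * m / z := by
    rw [div_le_div_iff₀ h1 hz]
    nlinarith [mul_le_mul_of_nonneg_right htj (mul_nonneg hm hz.le),
      mul_nonneg (mul_nonneg hB.le hm) (mul_nonneg hj.le hz.le), mul_nonneg hB.le hm]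
  have h0 : (0:ℝ) < 1 + t * m / (1 + j * z) := by positivity
  exact Real.log_le_log h0 (by linarith)

lemma log_split {B m z : ℝ} (hB : 0 < B) (hm : 0 ≤ m) (hz : 0 < z) :
    Real.log (1 + B * m / z) ≤ Real.log (1 + B * m) + (Real.log 2 + max (-Real.log z) 0) := by
  have h1 : (0:ℝ) < 1 + B * m := by positivity
  have h2 : (0:ℝ) < 1 + 1 / z := by positivity
  have hbm : (0:ℝ) ≤ B * m := mul_nonneg hB.le hm
  have step1 : Real.log (1 + B * m / z) ≤ Real.log ((1 + B * m) * (1 + 1 / z)) := by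
    have h0 : (0:ℝ) < 1 + B * m / z := by positivity
    apply Real.log_le_log h0
    have hzi : (0:ℝ) ≤ z⁻¹ := by positivity
    rw [div_eq_mul_inv, one_div]
    nlinarith [mul_nonneg hbm hzi]
  have step2 : Real.log ((1 + B * m) * (1 + 1 / z)) =
      Real.log (1 + B * m) + Real.log (1 + 1 / z) := Real.log_mul h1.ne' h2.ne'
  have step3 : Real.log (1 + 1 / z) ≤ Real.log 2 + max (-Real.log z) 0 := by
    rcases le_or_gt 1 z with h | h
    · have h12 : 1 + 1 / z ≤ 2 := by
        have : 1 / z ≤ 1 := by rw [div_le_one hz]; exact h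
        linarith
      have := Real.log_le_log h2 h12
      have := le_max_right (-Real.log z) 0
      linarith
    · have hz1 : (1:ℝ) ≤ 1 / z := by rw [le_div_iff₀ hz]; linarith
      have h12 : 1 + 1 / z ≤ 2 / z := by
        have : (2:ℝ) / z = 1 / z + 1 / z := by ring
        linarith
      have hlog : Real.log (2 / z) = Real.log 2 - Real.log z :=
        Real.log_div two_ne_zero hz.ne'
      have := Real.log_le_log h2 h12
      have := le_max_left (-Real.log z) 0
      linarith
  linarith

lemma phi_integrableOn :
    IntegrableOn (fun x : ℝ => max (-Real.log x) 0) (Ioi (0:ℝ)) volume := by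
  have hφm : Measurable fun x : ℝ => max (-Real.log x) 0 :=
    (Real.measurable_log.neg).max measurable_const
  have h1 : IntegrableOn (fun x : ℝ => max (-Real.log x) 0) (Ioc (0:ℝ) 1) volume := by
    have hg : IntegrableOn (fun x : ℝ => 2 * x ^ (-(1/2 : ℝ))) (Ioc (0:ℝ) 1) volume :=
      ((intervalIntegral.intervalIntegrable_rpow' (by norm_num : (-1:ℝ) < -(1/2))).const_mul 2).1
    apply Integrable.mono' hg hφm.aestronglyMeasurable
    rw [ae_restrict_iff' measurableSet_Ioc]
    refine ae_of_all _ fun x hx => ?_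
    have hx0 : (0:ℝ) < x := hx.1
    have hs : (0:ℝ) < Real.sqrt x := Real.sqrt_pos.2 hx0
    have hrp : x ^ (-(1/2 : ℝ)) = (Real.sqrt x)⁻¹ := by
      rw [Real.rpow_neg hx0.le, Real.sqrt_eq_rpow]
    have key : -Real.log x ≤ 2 * x ^ (-(1/2 : ℝ)) := by
      have hls : Real.log x = 2 * Real.log (Real.sqrt x) := by
        rw [Real.log_sqrt hx0.le]; ring
      have hinv : Real.log (Real.sqrt x)⁻¹ ≤ (Real.sqrt x)⁻¹ - 1 :=
        Real.log_le_sub_one_of_pos (by positivity)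
      rw [Real.log_inv] at hinv
      rw [hrp, hls]
      have : (0:ℝ) < (Real.sqrt x)⁻¹ := by positivity
      linarith
    rw [Real.norm_eq_abs, abs_of_nonneg (le_max_right _ _)]
    apply max_le key (by positivity)
  have h2 : IntegrableOn (fun x : ℝ => max (-Real.log x) 0) (Ioi (1:ℝ)) volume := by
    apply (integrableOn_zero (s := Ioi 1)).congr_fun ?_ measurableSet_Ioi
    intro x hx
    have : 0 ≤ Real.log x := Real.log_nonneg (le_of_lt hx)
    simp [max_eq_right (by linarith : -Real.log x ≤ 0)]
  exact (h1.union h2).mono_set fun x hx => by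
    rcases le_or_gt x 1 with h | h
    · exact Or.inl ⟨hx, h⟩
    · exact Or.inr h

/-- Corollary 1 of the paper: if the transmit power `P_t(P)` and jamming power `P_j(P)`
are continuous on `(0,∞)`, tend to infinity, and `P_t(P) ≤ B · P_j(P)` for `P > p_0`,
and the channel gains satisfy `E[H_m] < ∞`, `E[H_z] < ∞`, `H_e > 0` a.s., `H_z > 0` a.s.,
with `H_z` having a Lebesgue density bounded by `A`, then the secrecy-capacity upper bound
`E[(ln(1 + P_t(P) H_m/(1 + P_j(P) H_z)) − ln(1 + P_t(P) H_e))⁺]` tends to `0` as `P → ∞`. -/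
theorem secrecy_upper_bound_tendsto_zero
    {Ω : Type*} [MeasurableSpace Ω] (μ : Measure Ω) [IsProbabilityMeasure μ]
    (Pt Pj : ℝ → ℝ)
    (hPtc : ContinuousOn Pt (Ioi 0)) (hPjc : ContinuousOn Pj (Ioi 0))
    (hPtpos : ∀ P > (0 : ℝ), 0 < Pt P) (hPjpos : ∀ P > (0 : ℝ), 0 < Pj P)
    (hPttop : Tendsto Pt atTop atTop) (hPjtop : Tendsto Pj atTop atTop)
    (B p0 : ℝ) (hB : ∀ P > p0, Pt P ≤ B * Pj P)
    (Hm He Hz : Ω → ℝ)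
    (hHm : Measurable Hm) (hHe : Measurable He) (hHz : Measurable Hz)
    (hm0 : ∀ ω, 0 ≤ Hm ω) (he0 : ∀ ω, 0 ≤ He ω) (hz0 : ∀ ω, 0 ≤ Hz ω)
    (hHmInt : Integrable Hm μ) (hHzInt : Integrable Hz μ)
    (hepos : ∀ᵐ ω ∂μ, 0 < He ω) (hzpos : ∀ᵐ ω ∂μ, 0 < Hz ω)
    (A : ℝ) (f : ℝ → ℝ≥0∞)
    (hf : μ.map Hz = volume.withDensity f)
    (hfA : ∀ x, f x ≤ ENNReal.ofReal A) :
    Tendsto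
      (fun P => ∫ ω, max (Real.log (1 + Pt P * Hm ω / (1 + Pj P * Hz ω))
                          - Real.log (1 + Pt P * He ω)) 0 ∂μ)
      atTop (nhds 0) := by
  -- B is positive
  have hB0 : 0 < B := by
    set P₁ := max p0 0 + 1 with hP₁
    have h1 : p0 < P₁ := lt_of_le_of_lt (le_max_left _ _) (lt_add_one _)
    have h2 : (0:ℝ) < P₁ := lt_of_le_of_lt (le_max_right _ _) (lt_add_one _)
    nlinarith [hPtpos P₁ h2, hPjpos P₁ h2, hB P₁ h1]
  -- measurability of φ
  have hφm : Measurable fun x : ℝ => max (-Real.log x) 0 :=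
    (Real.measurable_log.neg).max measurable_const
  -- Integrability of max (-log Hz) 0
  have hν0 : (μ.map Hz) (Iic 0) = 0 := by
    rw [Measure.map_apply hHz measurableSet_Iic]
    have h := ae_iff.mp hzpos
    convert h using 2
    ext ω; simp [not_lt]
  have hrestr : (μ.map Hz).restrict (Ioi 0) = μ.map Hz := by
    apply Measure.restrict_eq_self_of_ae_mem
    rw [ae_iff]
    convert hν0 using 2
    ext x; simp [not_lt]
  have hle : (μ.map Hz).restrict (Ioi 0) ≤ (ENNReal.ofReal A) • (volume.restrict (Ioi 0)) := by
    rw [Measure.le_iff]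
    intro s hs
    rw [Measure.restrict_apply hs, Measure.smul_apply, Measure.restrict_apply hs, hf,
      withDensity_apply _ (hs.inter measurableSet_Ioi), smul_eq_mul]
    calc ∫⁻ x in s ∩ Ioi 0, f x ≤ ∫⁻ _ in s ∩ Ioi 0, ENNReal.ofReal A :=
          lintegral_mono fun x => hfA x
      _ = ENNReal.ofReal A * volume (s ∩ Ioi 0) := by rw [setLIntegral_const, mul_comm]
  have hφν : Integrable (fun x => max (-Real.log x) 0) (μ.map Hz) := by
    rw [← hrestr]
    exact ((phi_integrableOn.smul_measure ENNReal.ofReal_ne_top).mono_measure hle)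
  have hφHz : Integrable (fun ω => max (-Real.log (Hz ω)) 0) μ := by
    have := (integrable_map_measure hφm.aestronglyMeasurable hHz.aemeasurable).mp hφν
    exact this
  -- integrability of log(1 + B Hm)
  have hg1 : Integrable (fun ω => Real.log (1 + B * Hm ω)) μ := by
    apply Integrable.mono' (hHmInt.const_mul B)
      ((measurable_const.add (measurable_const.mul hHm)).log.aestronglyMeasurable)
    refine ae_of_all _ fun ω => ?_
    have hbm : (0:ℝ) ≤ B * Hm ω := mul_nonneg hB0.le (hm0 ω)
    have h1 : (0:ℝ) ≤ Real.log (1 + B * Hm ω) := Real.log_nonneg (by linarith)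
    have h2 : Real.log (1 + B * Hm ω) ≤ B * Hm ω := by
      have := Real.log_le_sub_one_of_pos (by linarith : (0:ℝ) < 1 + B * Hm ω)
      linarith
    rw [Real.norm_eq_abs]; change |Real.log (1 + B * Hm ω)| ≤ _; rw [abs_of_nonneg h1]
    exact h2
  set bound : Ω → ℝ := fun ω =>
    Real.log (1 + B * Hm ω) + (Real.log 2 + max (-Real.log (Hz ω)) 0) with hbound
  have hbi : Integrable bound μ := hg1.add ((integrable_const _).add hφHz)
  have key := tendsto_integral_filter_of_dominated_convergence (μ := μ)
    (F := fun P ω => max (Real.log (1 + Pt P * Hm ω / (1 + Pj P * Hz ω))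
                          - Real.log (1 + Pt P * He ω)) 0)
    (f := fun _ => (0:ℝ)) (l := atTop) bound
    (Eventually.of_forall fun P =>
      (((measurable_const.add ((measurable_const.mul hHm).div
          (measurable_const.add (measurable_const.mul hHz)))).log.sub
        (measurable_const.add (measurable_const.mul hHe)).log).max
          measurable_const).aestronglyMeasurable)
    (by -- h_bound
      filter_upwards [eventually_gt_atTop (max p0 0)] with P hP
      filter_upwards [hzpos] with ω hzω
      have hP0 : (0:ℝ) < P := lt_of_le_of_lt (le_max_right _ _) hP
      have hPp0 : p0 < P := lt_of_le_of_lt (le_max_left _ _) hP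
      have c1 := log_chain hB0 (hm0 ω) hzω (hPtpos P hP0) (hPjpos P hP0) (hB P hPp0)
      have c2 := log_split (m := Hm ω) hB0 (hm0 ω) hzω
      have hte : (0:ℝ) ≤ Pt P * He ω := mul_nonneg (hPtpos P hP0).le (he0 ω)
      have hL2 : 0 ≤ Real.log (1 + Pt P * He ω) := Real.log_nonneg (by linarith)
      rw [Real.norm_eq_abs, abs_of_nonneg (le_max_right _ _)]
      apply max_le
      · simp only [hbound]; linarith
      · have hbm : (0:ℝ) ≤ B * Hm ω := mul_nonneg hB0.le (hm0 ω)
        have q1 : (0:ℝ) ≤ Real.log (1 + B * Hm ω) := Real.log_nonneg (by linarith)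
        have q2 : (0:ℝ) ≤ Real.log 2 := Real.log_nonneg one_le_two
        have q3 := le_max_right (-Real.log (Hz ω)) 0
        simp only [hbound]; linarith)
    hbi
    (by -- h_lim
      filter_upwards [hepos, hzpos] with ω heω hzω
      have hL2top : Tendsto (fun P => Real.log (1 + Pt P * He ω)) atTop atTop := by
        apply Real.tendsto_log_atTop.comp
        exact tendsto_atTop_add_const_left _ _ (hPttop.atTop_mul_const heω)
      have hev : ∀ᶠ P in atTop,
          max (Real.log (1 + Pt P * Hm ω / (1 + Pj P * Hz ω))
               - Real.log (1 + Pt P * He ω)) 0 = 0 := by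
        filter_upwards [eventually_gt_atTop (max p0 0),
          hL2top.eventually_gt_atTop (Real.log (1 + B * Hm ω / Hz ω))] with P hP hPC
        have hP0 : (0:ℝ) < P := lt_of_le_of_lt (le_max_right _ _) hP
        have hPp0 : p0 < P := lt_of_le_of_lt (le_max_left _ _) hP
        have c1 := log_chain hB0 (hm0 ω) hzω (hPtpos P hP0) (hPjpos P hP0) (hB P hPp0)
        exact max_eq_right (by linarith)
      exact tendsto_const_nhds.congr' (hev.mono fun P h => h.symm))
  simpa using key
end

section
/- Let H_m and H_z be nonnegative random variables on a common probability space with E[H_m] < ∞ and 0 < E[H_z] < ∞, such that H_z > 0 almost surely and the law of H_z has a Lebesgue density bounded above by a constant A < ∞. Then for every constant B > 0, E[ ln(1 + B·H_m/H_z) ] ≤ ln( B·E[H_m] + E[H_z] ) + A; in particular E[ ln(1 + B·H_m/H_z) ] < ∞. -/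
open MeasureTheory
open Set
open scoped ENNReal

lemma lintegral_neg_log_Ioo :
    ∫⁻ x in Set.Ioo (0:ℝ) 1, ENNReal.ofReal (-Real.log x) = 1 := by
  have hnn : 0 ≤ᵐ[volume.restrict (Ioo (0:ℝ) 1)] fun x => -Real.log x := by
    filter_upwards [ae_restrict_mem measurableSet_Ioo] with x hx
    simpa using Real.log_nonpos hx.1.le hx.2.le
  have hm : AEMeasurable (fun x => -Real.log x) (volume.restrict (Ioo (0:ℝ) 1)) :=
    (Real.measurable_log.neg).aemeasurable
  rw [lintegral_eq_lintegral_meas_lt _ hnn hm]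
  have hset : ∀ t ∈ Ioi (0:ℝ),
      (volume.restrict (Ioo (0:ℝ) 1)) {x : ℝ | t < -Real.log x}
        = ENNReal.ofReal (Real.exp (-t)) := by
    intro t ht
    rw [Measure.restrict_apply]
    · have : {x : ℝ | t < -Real.log x} ∩ Ioo 0 1 = Ioo 0 (Real.exp (-t)) := by
        ext x
        simp only [mem_inter_iff, mem_setOf_eq, mem_Ioo]
        constructor
        · rintro ⟨h1, h2, h3⟩
          refine ⟨h2, ?_⟩
          have : Real.log x < -t := by linarith
          calc x = Real.exp (Real.log x) := (Real.exp_log h2).symm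
            _ < Real.exp (-t) := Real.exp_lt_exp.mpr this
        · rintro ⟨h1, h2⟩
          have hx1 : x < 1 := lt_trans h2 (by
            have : Real.exp (-t) < 1 := Real.exp_lt_one_iff.mpr (by linarith [mem_Ioi.mp ht])
            exact this)
          refine ⟨?_, h1, hx1⟩
          have := Real.log_lt_log h1 h2
          rw [Real.log_exp] at this
          linarith
      rw [this, Real.volume_Ioo, sub_zero]
    · exact measurableSet_lt measurable_const Real.measurable_log.neg
  rw [setLIntegral_congr_fun measurableSet_Ioi hset]
  rw [← ofReal_integral_eq_lintegral_ofReal]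
  · rw [integral_exp_neg_Ioi_zero, ENNReal.ofReal_one]
  · have := exp_neg_integrableOn_Ioi 0 one_pos
    simp only [neg_one_mul] at this
    exact this
  · filter_upwards with t using (Real.exp_pos _).le

/-- The integrability estimate of Appendix B of the paper: if `H_m, H_z ≥ 0` with
`E[H_m] < ∞`, `0 < E[H_z] < ∞`, `H_z > 0` a.s. and the law of `H_z` has a Lebesgue
density bounded by `A`, then for every `B > 0`,
`E[ln(1 + B·H_m/H_z)] ≤ ln(B·E[H_m] + E[H_z]) + A`; in particular the expectation
is finite. -/
theorem dominating_function_integrable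
    {Ω : Type*} [MeasurableSpace Ω] (μ : Measure Ω) [IsProbabilityMeasure μ]
    (Hm Hz : Ω → ℝ) (hHm : Measurable Hm) (hHz : Measurable Hz)
    (hm0 : ∀ ω, 0 ≤ Hm ω) (hz0 : ∀ ω, 0 ≤ Hz ω)
    (hHmInt : Integrable Hm μ) (hHzInt : Integrable Hz μ)
    (hEz : 0 < ∫ ω, Hz ω ∂μ)
    (hzpos : ∀ᵐ ω ∂μ, 0 < Hz ω)
    (A : ℝ) (f : ℝ → ℝ≥0∞)
    (hf : μ.map Hz = volume.withDensity f)
    (hfA : ∀ x, f x ≤ ENNReal.ofReal A)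
    (B : ℝ) (hB : 0 < B) :
    Integrable (fun ω => Real.log (1 + B * Hm ω / Hz ω)) μ ∧
    ∫ ω, Real.log (1 + B * Hm ω / Hz ω) ∂μ
      ≤ Real.log (B * (∫ ω, Hm ω ∂μ) + ∫ ω, Hz ω ∂μ) + A := by
  -- A is nonnegative
  have hmapP : IsProbabilityMeasure (μ.map Hz) := Measure.isProbabilityMeasure_map hHz.aemeasurable
  have hA0 : 0 ≤ A := by
    by_contra h
    push_neg at h
    have hf0 : f = fun _ => 0 := by
      funext x
      exact le_antisymm (by simpa [ENNReal.ofReal_eq_zero.mpr h.le] using hfA x) zero_le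
    have : (μ.map Hz) Set.univ = 0 := by rw [hf, hf0]; simp
    simp [measure_univ] at this
  -- the auxiliary function φ on ℝ
  set φ : ℝ → ℝ≥0∞ := (Set.Ioo (0:ℝ) 1).indicator (fun x => ENNReal.ofReal (-Real.log x))
    with hφdef
  have hφmeas : Measurable φ :=
    (ENNReal.measurable_ofReal.comp Real.measurable_log.neg).indicator measurableSet_Ioo
  have hφeq : ∀ x : ℝ, 0 < x → φ x = ENNReal.ofReal (max 0 (-Real.log x)) := by
    intro x hx
    by_cases hx1 : x < 1
    · rw [hφdef]
      rw [Set.indicator_of_mem (Set.mem_Ioo.mpr ⟨hx, hx1⟩)]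
      congr 1
      have : 0 ≤ -Real.log x := by simpa using Real.log_nonpos hx.le hx1.le
      rw [max_eq_right this]
    · push_neg at hx1
      rw [hφdef, Set.indicator_of_notMem (by simp [Set.mem_Ioo, not_lt.mpr hx1])]
      have : -Real.log x ≤ 0 := by simpa using Real.log_nonneg hx1
      rw [max_eq_left this, ENNReal.ofReal_zero]
  have hφint : ∫⁻ x, φ x = 1 := by
    rw [hφdef, lintegral_indicator measurableSet_Ioo _]
    exact lintegral_neg_log_Ioo
  -- key lintegral bound
  have hkey : ∫⁻ ω, ENNReal.ofReal (max 0 (-Real.log (Hz ω))) ∂μ ≤ ENNReal.ofReal A := by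
    have h1 : ∫⁻ ω, ENNReal.ofReal (max 0 (-Real.log (Hz ω))) ∂μ = ∫⁻ ω, φ (Hz ω) ∂μ := by
      apply lintegral_congr_ae
      filter_upwards [hzpos] with ω hω
      rw [hφeq _ hω]
    rw [h1, ← lintegral_map hφmeas hHz, hf]
    have hle : volume.withDensity f ≤ volume.withDensity (fun _ => ENNReal.ofReal A) :=
      withDensity_mono (Filter.Eventually.of_forall hfA)
    calc ∫⁻ x, φ x ∂(volume.withDensity f)
        ≤ ∫⁻ x, φ x ∂(volume.withDensity (fun _ => ENNReal.ofReal A)) :=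
          lintegral_mono' hle le_rfl
      _ = ∫⁻ x, ENNReal.ofReal A * φ x := lintegral_withDensity_eq_lintegral_mul _ measurable_const hφmeas
      _ = ENNReal.ofReal A * ∫⁻ x, φ x := lintegral_const_mul _ hφmeas
      _ = ENNReal.ofReal A := by rw [hφint, mul_one]
  -- m := max 0 (-log Hz)
  set m : Ω → ℝ := fun ω => max 0 (-Real.log (Hz ω)) with hmdef
  have hm_meas : Measurable m := measurable_const.max (Real.measurable_log.comp hHz).neg
  have hm_nn : ∀ ω, 0 ≤ m ω := fun ω => le_max_left _ _
  have hmInt : Integrable m μ := by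
    refine ⟨hm_meas.aestronglyMeasurable, ?_⟩
    rw [hasFiniteIntegral_iff_ofReal (Filter.Eventually.of_forall hm_nn)]
    exact lt_of_le_of_lt hkey ENNReal.ofReal_lt_top
  have hmI : ∫ ω, m ω ∂μ ≤ A := by
    have := ofReal_integral_eq_lintegral_ofReal hmInt (Filter.Eventually.of_forall hm_nn)
    have h2 : ENNReal.ofReal (∫ ω, m ω ∂μ) ≤ ENNReal.ofReal A := this ▸ hkey
    exact (ENNReal.ofReal_le_ofReal_iff hA0).mp h2
  -- log Hz is integrable
  have hlogz_meas : Measurable fun ω => Real.log (Hz ω) := Real.measurable_log.comp hHz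
  have hlogzInt : Integrable (fun ω => Real.log (Hz ω)) μ := by
    refine Integrable.mono' (hHzInt.add hmInt) hlogz_meas.aestronglyMeasurable ?_
    filter_upwards [hzpos] with ω hω
    simp only [Pi.add_apply]
    rw [Real.norm_eq_abs, abs_le]
    constructor
    · have : -Real.log (Hz ω) ≤ m ω := le_max_right _ _
      have h0 : 0 ≤ Hz ω := hz0 ω
      linarith
    · have : Real.log (Hz ω) ≤ Hz ω - 1 := Real.log_le_sub_one_of_pos hω
      have : Real.log (Hz ω) ≤ Hz ω := by linarith
      linarith [hm_nn ω]
  -- constant c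
  set c : ℝ := B * (∫ ω, Hm ω ∂μ) + ∫ ω, Hz ω ∂μ with hcdef
  have hc : 0 < c := add_pos_of_nonneg_of_pos
    (mul_nonneg hB.le (integral_nonneg hm0)) hEz
  -- tangent bound
  have htan : ∀ x : ℝ, 0 < x → Real.log x ≤ x / c - 1 + Real.log c := by
    intro x hx
    have h1 : Real.log x = Real.log (x / c) + Real.log c := by
      rw [← Real.log_mul (by positivity) (ne_of_gt hc), div_mul_cancel₀ _ (ne_of_gt hc)]
    have h2 : Real.log (x / c) ≤ x / c - 1 := Real.log_le_sub_one_of_pos (by positivity)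
    linarith
  -- u := Hz + B Hm
  set u : Ω → ℝ := fun ω => Hz ω + B * Hm ω with hudef
  have huInt : Integrable u μ := hHzInt.add (hHmInt.const_mul B)
  have hu_pos : ∀ᵐ ω ∂μ, 0 < u ω := by
    filter_upwards [hzpos] with ω hω
    have := mul_nonneg hB.le (hm0 ω)
    show 0 < Hz ω + B * Hm ω
    linarith
  have hlogu_meas : Measurable fun ω => Real.log (u ω) :=
    Real.measurable_log.comp (hHz.add (hHm.const_mul B))
  have hloguInt : Integrable (fun ω => Real.log (u ω)) μ := by
    have hbInt : Integrable (fun ω => u ω / c + |Real.log c| + |Real.log (Hz ω)|) μ :=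
      ((huInt.div_const c).add (integrable_const _)).add hlogzInt.abs
    refine Integrable.mono' hbInt hlogu_meas.aestronglyMeasurable ?_
    filter_upwards [hzpos] with ω hω
    have hu : 0 < u ω := by
      have := mul_nonneg hB.le (hm0 ω)
      show 0 < Hz ω + B * Hm ω; linarith
    rw [Real.norm_eq_abs, abs_le]
    constructor
    · have h1 : Real.log (Hz ω) ≤ Real.log (u ω) := by
        apply Real.log_le_log hω
        have := mul_nonneg hB.le (hm0 ω)
        show Hz ω ≤ Hz ω + B * Hm ω; linarith
      have h2 : -|Real.log (Hz ω)| ≤ Real.log (Hz ω) := neg_abs_le _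
      have h3 : 0 ≤ u ω / c := by positivity
      have h4 : 0 ≤ |Real.log c| := abs_nonneg _
      linarith
    · have h1 := htan (u ω) hu
      have h2 : Real.log c ≤ |Real.log c| := le_abs_self _
      have h3 : 0 ≤ |Real.log (Hz ω)| := abs_nonneg _
      linarith
  -- pointwise a.e. identity
  have heq : ∀ᵐ ω ∂μ, Real.log (1 + B * Hm ω / Hz ω) = Real.log (u ω) - Real.log (Hz ω) := by
    filter_upwards [hzpos] with ω hω
    have hu : 0 < u ω := by
      have := mul_nonneg hB.le (hm0 ω)
      show 0 < Hz ω + B * Hm ω; linarith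
    have harg : 1 + B * Hm ω / Hz ω = u ω / Hz ω := by
      field_simp [hudef]
      rfl
    rw [harg, Real.log_div (ne_of_gt hu) (ne_of_gt hω)]
  have hTargetInt : Integrable (fun ω => Real.log (1 + B * Hm ω / Hz ω)) μ :=
    (hloguInt.sub hlogzInt).congr (by filter_upwards [heq] with ω h using h.symm)
  refine ⟨hTargetInt, ?_⟩
  rw [integral_congr_ae heq, integral_sub hloguInt hlogzInt]
  -- bound ∫ log u
  have hlogu_bound : ∫ ω, Real.log (u ω) ∂μ ≤ Real.log c := by
    have hbInt : Integrable (fun ω => u ω / c + (Real.log c - 1)) μ :=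
      (huInt.div_const c).add (integrable_const _)
    have h1 : ∫ ω, Real.log (u ω) ∂μ ≤ ∫ ω, (u ω / c + (Real.log c - 1)) ∂μ := by
      apply integral_mono_ae hloguInt hbInt
      filter_upwards [hu_pos] with ω hω
      have := htan (u ω) hω
      linarith
    have h2 : ∫ ω, (u ω / c + (Real.log c - 1)) ∂μ
        = (∫ ω, u ω ∂μ) / c + (Real.log c - 1) := by
      rw [integral_add (huInt.div_const c) (integrable_const _), integral_div]
      simp [measure_univ]
    have h3 : ∫ ω, u ω ∂μ = c := by
      show (∫ ω, Hz ω + B * Hm ω ∂μ) = c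
      rw [integral_add hHzInt (hHmInt.const_mul B), integral_const_mul, hcdef]
      ring
    rw [h2, h3, div_self (ne_of_gt hc)] at h1
    linarith
  -- bound -∫ log Hz
  have hlogz_bound : -∫ ω, Real.log (Hz ω) ∂μ ≤ A := by
    have h1 : ∫ ω, -Real.log (Hz ω) ∂μ ≤ ∫ ω, m ω ∂μ := by
      apply integral_mono_ae hlogzInt.neg hmInt
      filter_upwards with ω using le_max_right _ _
    rw [integral_neg] at h1
    linarith
  linarith
end

section
/- For any fixed real numbers x ≥ 0 and y ≥ 0, the function P ↦ max( ln(1 + P·x) − ln(1 + P·y), 0 ) is concave on [0, ∞). -/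
private lemma log_affine_hasDerivAt (c : ℝ) {P : ℝ} (h : 0 < 1 + P * c) :
    HasDerivAt (fun P : ℝ => Real.log (1 + P * c)) (c / (1 + P * c)) P := by
  have h1 : HasDerivAt (fun P : ℝ => 1 + P * c) c P := by
    simpa using ((hasDerivAt_id P).mul_const c).const_add 1
  simpa [div_eq_mul_inv, mul_comm, Function.comp_def] using (Real.hasDerivAt_log h.ne').comp P h1

private lemma ratio_hasDerivAt (c : ℝ) {P : ℝ} (h : 0 < 1 + P * c) :
    HasDerivAt (fun P : ℝ => c / (1 + P * c)) (-(c ^ 2) / (1 + P * c) ^ 2) P := by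
  have h1 : HasDerivAt (fun P : ℝ => 1 + P * c) c P := by
    simpa using ((hasDerivAt_id P).mul_const c).const_add 1
  have := (h1.inv h.ne').const_mul c
  simpa [div_eq_mul_inv, mul_comm, mul_assoc, pow_two, neg_div, mul_div_assoc] using this

/-- Step (f) of the upper bound proof of Theorem 1: for fixed `x, y ≥ 0`, the map
`P ↦ (ln(1 + P·x) − ln(1 + P·y))⁺` is concave on `[0, ∞)`. -/
theorem positive_part_log_diff_concaveOn
    (x y : ℝ) (hx : 0 ≤ x) (hy : 0 ≤ y) :
    ConcaveOn ℝ (Set.Ici 0)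
      (fun P => max (Real.log (1 + P * x) - Real.log (1 + P * y)) 0) := by
  rcases le_total x y with hxy | hxy
  · -- the function is identically 0 on `Ici 0`
    refine (concaveOn_const 0 (convex_Ici 0)).congr fun P hP => ?_
    have hP : (0:ℝ) ≤ P := hP
    have hpx : (0:ℝ) < 1 + P * x := by positivity
    have h : Real.log (1 + P * x) ≤ Real.log (1 + P * y) :=
      Real.log_le_log hpx (by nlinarith)
    simp [max_eq_right, sub_nonpos.mpr h]
  · -- the function equals the log-difference on `Ici 0`, which is concave
    set g : ℝ → ℝ := fun P => Real.log (1 + P * x) - Real.log (1 + P * y) with hg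
    have hpos : ∀ P : ℝ, 0 ≤ P → 0 < 1 + P * x ∧ 0 < 1 + P * y := by
      intro P hP; constructor <;> positivity
    have hgd : ∀ P : ℝ, 0 ≤ P →
        HasDerivAt g (x / (1 + P * x) - y / (1 + P * y)) P := fun P hP =>
      (log_affine_hasDerivAt x (hpos P hP).1).sub (log_affine_hasDerivAt y (hpos P hP).2)
    have hderiv : ∀ P ∈ Set.Ioi (0:ℝ), deriv g P = x / (1 + P * x) - y / (1 + P * y) :=
      fun P hP => (hgd P (le_of_lt hP)).deriv
    have hgconc : ConcaveOn ℝ (Set.Ici 0) g := by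
      apply concaveOn_of_deriv2_nonpos (convex_Ici 0)
      · intro P hP
        exact ((hgd P hP).continuousAt).continuousWithinAt
      · intro P hP
        exact ((hgd P (le_of_lt (by simpa using hP))).differentiableAt).differentiableWithinAt
      · intro P hP
        rw [interior_Ici] at hP
        have hE : deriv g =ᶠ[nhds P] fun P => x / (1 + P * x) - y / (1 + P * y) :=
          Filter.eventuallyEq_of_mem (isOpen_Ioi.mem_nhds hP) hderiv
        have hh : HasDerivAt (fun P : ℝ => x / (1 + P * x) - y / (1 + P * y))
            (-(x ^ 2) / (1 + P * x) ^ 2 - -(y ^ 2) / (1 + P * y) ^ 2) P :=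
          (ratio_hasDerivAt x (hpos P (le_of_lt hP)).1).sub
            (ratio_hasDerivAt y (hpos P (le_of_lt hP)).2)
        exact (hE.differentiableAt_iff.mpr hh.differentiableAt).differentiableWithinAt
      · intro P hP
        rw [interior_Ici] at hP
        have hP' : (0:ℝ) ≤ P := le_of_lt hP
        have hE : deriv g =ᶠ[nhds P] fun P => x / (1 + P * x) - y / (1 + P * y) :=
          Filter.eventuallyEq_of_mem (isOpen_Ioi.mem_nhds hP) hderiv
        have hh : HasDerivAt (fun P : ℝ => x / (1 + P * x) - y / (1 + P * y))
            (-(x ^ 2) / (1 + P * x) ^ 2 - -(y ^ 2) / (1 + P * y) ^ 2) P :=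
          (ratio_hasDerivAt x (hpos P hP').1).sub (ratio_hasDerivAt y (hpos P hP').2)
        have : deriv^[2] g P = -(x ^ 2) / (1 + P * x) ^ 2 - -(y ^ 2) / (1 + P * y) ^ 2 := by
          simp only [Function.iterate_succ, Function.iterate_zero, Function.comp_apply, id]
          rw [hE.deriv_eq]
          exact hh.deriv
        rw [this]
        have h1 := (hpos P hP').1
        have h2 := (hpos P hP').2
        rw [sub_nonpos, neg_div, neg_div, neg_le_neg_iff,
          div_le_div_iff₀ (by positivity) (by positivity)]
        have key : y * (1 + P * x) ≤ x * (1 + P * y) := by nlinarith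
        have key2 := mul_self_le_mul_self (by positivity : (0:ℝ) ≤ y * (1 + P * x)) key
        nlinarith [key2]
    refine hgconc.congr fun P hP => ?_
    have hP : (0:ℝ) ≤ P := hP
    have h : Real.log (1 + P * y) ≤ Real.log (1 + P * x) :=
      Real.log_le_log (hpos P hP).2 (by nlinarith)
    simp [hg, max_eq_left, sub_nonneg.mpr h]
end

section
/- For any fixed real numbers x ≥ 0 and y ≥ 0, the function P ↦ ln(1 + P·x/(1 + P·y)) is concave on [0, ∞). -/
/-- Step (b) of the upper bound proof of Theorem 2 (Appendix D): for fixed `x, y ≥ 0`,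
the map `P ↦ ln(1 + P·x/(1 + P·y))` is concave on `[0, ∞)`. -/
theorem log_ratio_concaveOn
    (x y : ℝ) (hx : 0 ≤ x) (hy : 0 ≤ y) :
    ConcaveOn ℝ (Set.Ici 0)
      (fun P => Real.log (1 + P * x / (1 + P * y))) := by
  -- positivity facts
  have hden : ∀ c : ℝ, 0 ≤ c → ∀ P : ℝ, 0 ≤ P → (0:ℝ) < 1 + P * c := by
    intro c hc P hP; nlinarith
  -- the auxiliary function
  set g : ℝ → ℝ := fun P => Real.log (1 + P * (x + y)) - Real.log (1 + P * y) with hg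
  have key : ∀ c : ℝ, 0 ≤ c → ∀ P : ℝ, 0 < P →
      HasDerivAt (fun Q => Real.log (1 + Q * c)) (c / (1 + P * c)) P := by
    intro c hc P hP
    have h1 : HasDerivAt (fun Q : ℝ => 1 + Q * c) c P := by
      simpa using ((hasDerivAt_id P).mul_const c).const_add 1
    have := h1.log (ne_of_gt (hden c hc P hP.le))
    simpa [mul_comm] using this
  have key2 : ∀ c : ℝ, 0 ≤ c → ∀ P : ℝ, 0 < P →
      HasDerivAt (fun Q => c / (1 + Q * c)) (-(c^2) / (1 + P * c)^2) P := by
    intro c hc P hP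
    have h1 : HasDerivAt (fun Q : ℝ => 1 + Q * c) c P := by
      simpa using ((hasDerivAt_id P).mul_const c).const_add 1
    have := (hasDerivAt_const P c).div h1 (ne_of_gt (hden c hc P hP.le))
    refine this.congr_deriv ?_
    rw [zero_mul]
    ring
  have hgconc : ConcaveOn ℝ (Set.Ici 0) g := by
    apply concaveOn_of_hasDerivWithinAt2_nonpos (convex_Ici 0)
      (f' := fun P => (x + y) / (1 + P * (x + y)) - y / (1 + P * y))
      (f'' := fun P => -((x+y)^2) / (1 + P * (x+y))^2 - (-(y^2) / (1 + P * y)^2))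
    · -- continuity of g on Ici 0
      apply ContinuousOn.sub
      · apply ContinuousOn.log
        · fun_prop
        · intro P hP; exact ne_of_gt (hden _ (by linarith) P hP)
      · apply ContinuousOn.log
        · fun_prop
        · intro P hP; exact ne_of_gt (hden _ hy P hP)
    · intro P hP
      rw [interior_Ici] at hP
      exact (((key (x+y) (by linarith) P hP).sub (key y hy P hP))).hasDerivWithinAt
    · intro P hP
      rw [interior_Ici] at hP
      exact (((key2 (x+y) (by linarith) P hP).sub (key2 y hy P hP))).hasDerivWithinAt
    · intro P hP
      rw [interior_Ici] at hP
      have hP' : (0:ℝ) ≤ P := hP.le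
      have h1 : (0:ℝ) < 1 + P * y := hden y hy P hP'
      have h2 : (0:ℝ) < 1 + P * (x+y) := hden (x+y) (by linarith) P hP'
      have hab : y / (1 + P * y) ≤ (x + y) / (1 + P * (x+y)) := by
        rw [div_le_div_iff₀ h1 h2]; nlinarith
      have ha : 0 ≤ y / (1 + P * y) := by positivity
      have hsq : (y / (1 + P * y))^2 ≤ ((x+y) / (1 + P * (x+y)))^2 :=
        pow_le_pow_left₀ ha hab 2
      have : y^2 / (1 + P * y)^2 ≤ (x+y)^2 / (1 + P * (x+y))^2 := by
        simpa [div_pow] using hsq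
      have h3 := neg_le_neg this
      simp only [neg_div]
      linarith
  refine hgconc.congr fun P hP => ?_
  have hP : (0:ℝ) ≤ P := hP
  have h1 : (0:ℝ) < 1 + P * y := hden y hy P hP
  have h2 : (0:ℝ) < 1 + P * (x+y) := hden (x+y) (by linarith) P hP
  have harg : 1 + P * x / (1 + P * y) = (1 + P * (x+y)) / (1 + P * y) := by
    field_simp; ring
  simp only [hg, harg]
  rw [Real.log_div (ne_of_gt h2) (ne_of_gt h1)]
end

section
/- Let ((H_m(i), H_e(i), H_z(i)))_{i≥1} be an i.i.d. sequence of triples of nonnegative real random variables with H_e(1) < ∞ almost surely, and let P_t > 0, P_j ≥ 0 be constants with P(H_m(1)/(1 + P_j·H_z(1)) > 0) > 0. Then there exists R > 0 such that, with T := inf{ t ≥ 1 : Σ_{i=1}^t ln(1 + P_t·H_m(i)/(1 + P_j·H_z(i))) ≥ R }, one has E[T] < ∞ and E[ max( R − ln(1 + P_t·Σ_{i=1}^T H_e(i)), 0 ) ] > 0; consequently the ratio (1/E[T])·E[ max( R − ln(1 + P_t·Σ_{i=1}^T H_e(i)), 0 ) ] is strictly positive. -/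
open MeasureTheory ProbabilityTheory
open scoped ENNReal

private lemma aux_measurable_sInf {Ω : Type*} [MeasurableSpace Ω] (E : ℕ → Set Ω)
    (hE : ∀ n, MeasurableSet (E n)) :
    Measurable fun ω => sInf {t | ω ∈ E t} := by
  apply measurable_to_countable'
  intro n
  rcases eq_or_ne n 0 with rfl | hn
  · have hset : (fun ω => sInf {t | ω ∈ E t}) ⁻¹' {0} = E 0 ∪ ⋂ m, (E m)ᶜ := by
      ext ω
      simp only [Set.mem_preimage, Set.mem_singleton_iff, Set.mem_union, Set.mem_iInter,
        Set.mem_compl_iff]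
      rw [Nat.sInf_eq_zero]
      constructor
      · rintro (h | h)
        · exact Or.inl h
        · exact Or.inr fun m => by
            have := Set.eq_empty_iff_forall_notMem.mp h m
            simpa using this
      · rintro (h | h)
        · exact Or.inl h
        · exact Or.inr (Set.eq_empty_iff_forall_notMem.mpr fun m hm => h m hm)
    rw [hset]
    exact (hE 0).union (MeasurableSet.iInter fun m => (hE m).compl)
  · have hset : (fun ω => sInf {t | ω ∈ E t}) ⁻¹' {n} =
        E n ∩ ⋂ m ∈ Finset.range n, (E m)ᶜ := by
      ext ω
      simp only [Set.mem_preimage, Set.mem_singleton_iff, Set.mem_inter_iff, Set.mem_iInter,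
        Finset.mem_range, Set.mem_compl_iff]
      constructor
      · intro h
        have hne : {t | ω ∈ E t}.Nonempty := by
          by_contra hemp
          rw [Set.not_nonempty_iff_eq_empty] at hemp
          rw [hemp, Nat.sInf_empty] at h
          exact hn h.symm
        refine ⟨h ▸ Nat.sInf_mem hne, fun m hm => ?_⟩
        exact Nat.notMem_of_lt_sInf (h ▸ hm)
      · rintro ⟨hmem, hmin⟩
        refine le_antisymm (Nat.sInf_le hmem) ?_
        by_contra hlt
        push_neg at hlt
        have hne : {t | ω ∈ E t}.Nonempty := ⟨n, hmem⟩
        exact hmin _ hlt (Nat.sInf_mem hne)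
    rw [hset]
    exact (hE n).inter (MeasurableSet.biInter (Set.to_countable _) fun m _ => (hE m).compl)

private lemma aux_measurable_apply {Ω : Type*} [MeasurableSpace Ω] {T : Ω → ℕ}
    (hT : Measurable T) {F : ℕ → Ω → ℝ} (hF : ∀ n, Measurable (F n)) :
    Measurable fun ω => F (T ω) ω := by
  have h : Measurable fun p : Ω × ℕ => F p.2 p.1 :=
    measurable_from_prod_countable_left fun n => hF n
  exact h.comp (measurable_id.prodMk hT)

/-- Remark 4 of the paper: for an i.i.d. block-fading sequence of channel-gain triples
`(H_m(i), H_e(i), H_z(i))` with `P_t > 0`, `P_j ≥ 0` and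
`P(H_m/(1 + P_j H_z) > 0) > 0`, there exists a rate `R > 0` such that, with
`T = inf {t ≥ 1 | Σ_{i<t} ln(1 + P_t H_m(i)/(1 + P_j H_z(i))) ≥ R}`, we have
`E[T] < ∞` and `E[(R − ln(1 + P_t Σ_{i<T} H_e(i)))⁺] > 0`; consequently the
renewal-reward ratio is strictly positive, so `R_s^{1-bit} > 0`. -/
theorem one_bit_feedback_positive_rate
    {Ω : Type*} [MeasurableSpace Ω] (μ : Measure Ω) [IsProbabilityMeasure μ]
    (Hm He Hz : ℕ → Ω → ℝ)
    (hmeas : ∀ i, Measurable (fun ω => (Hm i ω, He i ω, Hz i ω)))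
    (hindep : iIndepFun
      (fun i ω => (Hm i ω, He i ω, Hz i ω)) μ)
    (hident : ∀ i, μ.map (fun ω => (Hm i ω, He i ω, Hz i ω))
      = μ.map (fun ω => (Hm 0 ω, He 0 ω, Hz 0 ω)))
    (h0 : ∀ i ω, 0 ≤ Hm i ω ∧ 0 ≤ He i ω ∧ 0 ≤ Hz i ω)
    (Pt Pj : ℝ) (hPt : 0 < Pt) (hPj : 0 ≤ Pj)
    (hpos : 0 < μ {ω | 0 < Hm 0 ω / (1 + Pj * Hz 0 ω)}) :
    ∃ R : ℝ, 0 < R ∧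
      ∀ T : Ω → ℕ,
        (∀ ω, T ω = sInf {t : ℕ | 1 ≤ t ∧
            R ≤ ∑ i ∈ Finset.range t,
              Real.log (1 + Pt * Hm i ω / (1 + Pj * Hz i ω))}) →
        (∫⁻ ω, (T ω : ℝ≥0∞) ∂μ) < ⊤ ∧
        0 < ∫ ω, max (R - Real.log (1 + Pt * ∑ i ∈ Finset.range (T ω), He i ω)) 0 ∂μ ∧
        0 < (∫ ω, max (R - Real.log (1 + Pt * ∑ i ∈ Finset.range (T ω), He i ω)) 0 ∂μ)
              / (∫⁻ ω, (T ω : ℝ≥0∞) ∂μ).toReal := by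
  classical
  have hHm : ∀ i, Measurable (Hm i) := fun i => measurable_fst.comp (hmeas i)
  have hHe : ∀ i, Measurable (He i) :=
    fun i => (measurable_fst.comp measurable_snd).comp (hmeas i)
  have hHz : ∀ i, Measurable (Hz i) :=
    fun i => (measurable_snd.comp measurable_snd).comp (hmeas i)
  have hden : ∀ i ω, 0 < 1 + Pj * Hz i ω := fun i ω => by
    have := mul_nonneg hPj (h0 i ω).2.2; linarith
  have hratnn : ∀ i ω, 0 ≤ Hm i ω / (1 + Pj * Hz i ω) :=
    fun i ω => div_nonneg (h0 i ω).1 (hden i ω).le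
  -- choose δ
  obtain ⟨δ, hδ, hq⟩ : ∃ δ : ℝ, 0 < δ ∧ 0 < μ {ω | δ ≤ Hm 0 ω / (1 + Pj * Hz 0 ω)} := by
    by_contra hcon
    push_neg at hcon
    have hnull : ∀ n : ℕ, μ {ω | 1 / ((n : ℝ) + 1) ≤ Hm 0 ω / (1 + Pj * Hz 0 ω)} = 0 := fun n =>
      nonpos_iff_eq_zero.mp (hcon _ (by positivity))
    have hsub : {ω | 0 < Hm 0 ω / (1 + Pj * Hz 0 ω)} ⊆
        ⋃ n : ℕ, {ω | 1 / ((n : ℝ) + 1) ≤ Hm 0 ω / (1 + Pj * Hz 0 ω)} := by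
      intro ω hω
      have hω' : (0 : ℝ) < Hm 0 ω / (1 + Pj * Hz 0 ω) := hω
      obtain ⟨n, hn⟩ := exists_nat_one_div_lt hω'
      exact Set.mem_iUnion.mpr ⟨n, hn.le⟩
    exact absurd (measure_mono_null hsub (measure_iUnion_null hnull)) hpos.ne'
  -- choose c
  obtain ⟨c, hc1, hp⟩ : ∃ c : ℝ, 1 ≤ c ∧
      0 < μ {ω | δ ≤ Hm 0 ω / (1 + Pj * Hz 0 ω) ∧ He 0 ω ≤ c} := by
    by_contra hcon
    push_neg at hcon
    have hnull : ∀ n : ℕ,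
        μ {ω | δ ≤ Hm 0 ω / (1 + Pj * Hz 0 ω) ∧ He 0 ω ≤ (n : ℝ) + 1} = 0 := fun n =>
      nonpos_iff_eq_zero.mp (hcon _ (le_add_of_nonneg_left (Nat.cast_nonneg n)))
    have hsub : {ω | δ ≤ Hm 0 ω / (1 + Pj * Hz 0 ω)} ⊆
        ⋃ n : ℕ, {ω | δ ≤ Hm 0 ω / (1 + Pj * Hz 0 ω) ∧ He 0 ω ≤ (n : ℝ) + 1} := by
      intro ω hω
      obtain ⟨n, hn⟩ := exists_nat_ge (He 0 ω)
      exact Set.mem_iUnion.mpr ⟨n, hω, hn.trans (by linarith)⟩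
    exact absurd (measure_mono_null hsub (measure_iUnion_null hnull)) hq.ne'
  have hc0 : (0 : ℝ) < c := lt_of_lt_of_le one_pos hc1
  set ε := Real.log (1 + Pt * δ) with hεdef
  have hε : 0 < ε := Real.log_pos (by nlinarith)
  -- choose k
  obtain ⟨k, hk1, hklog⟩ : ∃ k : ℕ, 1 ≤ k ∧
      Real.log (1 + Pt * ((k : ℝ) * c)) < (k : ℝ) * ε := by
    have hPtc : (0 : ℝ) < Pt * c := mul_pos hPt hc0
    have htend : Filter.Tendsto (fun x : ℝ => 1 + Pt * c * x) Filter.atTop Filter.atTop :=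
      Filter.tendsto_atTop_add_const_left _ 1
        (Filter.Tendsto.const_mul_atTop hPtc Filter.tendsto_id)
    have h2 := Real.isLittleO_log_id_atTop.comp_tendsto htend
    have h3 : (fun x : ℝ => (1 : ℝ) + Pt * c * x) =O[Filter.atTop] (fun x : ℝ => x) := by
      apply Asymptotics.IsBigO.of_bound (1 + Pt * c)
      filter_upwards [Filter.eventually_ge_atTop (1 : ℝ)] with x hx
      have hx0 : (0 : ℝ) ≤ x := zero_le_one.trans hx
      rw [Real.norm_of_nonneg (by nlinarith), Real.norm_of_nonneg hx0]
      nlinarith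
    have h4 := h2.trans_isBigO h3
    rw [Asymptotics.isLittleO_iff] at h4
    obtain ⟨x₀, hx₀⟩ := Filter.eventually_atTop.mp (h4 (half_pos hε))
    refine ⟨max 1 ⌈x₀⌉₊, le_max_left _ _, ?_⟩
    set k : ℕ := max 1 ⌈x₀⌉₊ with hkdef
    have hk1' : (1 : ℝ) ≤ (k : ℝ) := by exact_mod_cast le_max_left 1 ⌈x₀⌉₊
    have hkx : x₀ ≤ (k : ℝ) := by
      refine le_trans (Nat.le_ceil x₀) ?_
      exact_mod_cast le_max_right 1 ⌈x₀⌉₊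
    have hb := hx₀ (k : ℝ) hkx
    calc Real.log (1 + Pt * ((k : ℝ) * c))
        = Real.log (1 + Pt * c * (k : ℝ)) := by ring_nf
      _ ≤ ‖Real.log (1 + Pt * c * (k : ℝ))‖ := le_abs_self _
      _ ≤ ε / 2 * ‖(k : ℝ)‖ := hb
      _ = ε / 2 * (k : ℝ) := by rw [Real.norm_of_nonneg (by linarith)]
      _ < (k : ℝ) * ε := by nlinarith
  refine ⟨(k : ℝ) * ε, by positivity, fun T hTdef => ?_⟩
  -- measurable sets in the value space
  set SA : Set (ℝ × ℝ × ℝ) := {p | δ ≤ p.1 / (1 + Pj * p.2.2)} with hSAdef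
  have hSA : MeasurableSet SA := measurableSet_le measurable_const
    (measurable_fst.div (measurable_const.add
      (measurable_const.mul (measurable_snd.comp measurable_snd))))
  set SB : Set (ℝ × ℝ × ℝ) := {p | δ ≤ p.1 / (1 + Pj * p.2.2) ∧ p.2.1 ≤ c} with hSBdef
  have hSB : MeasurableSet SB := by
    refine MeasurableSet.inter ?_ ?_
    · exact measurableSet_le measurable_const
        (measurable_fst.div (measurable_const.add
          (measurable_const.mul (measurable_snd.comp measurable_snd))))
    · exact measurableSet_le (measurable_fst.comp measurable_snd) measurable_const
  -- identical distribution of preimages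
  have hpre : ∀ (i : ℕ) (S : Set (ℝ × ℝ × ℝ)), MeasurableSet S →
      μ ((fun ω => (Hm i ω, He i ω, Hz i ω)) ⁻¹' S)
        = μ ((fun ω => (Hm 0 ω, He 0 ω, Hz 0 ω)) ⁻¹' S) := by
    intro i S hS
    rw [← Measure.map_apply (hmeas i) hS, ← Measure.map_apply (hmeas 0) hS, hident i]
  -- independence/product formula
  have hprod : ∀ (s : Finset ℕ) (S : Set (ℝ × ℝ × ℝ)), MeasurableSet S →
      μ (⋂ i ∈ s, (fun ω => (Hm i ω, He i ω, Hz i ω)) ⁻¹' S)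
        = μ ((fun ω => (Hm 0 ω, He 0 ω, Hz 0 ω)) ⁻¹' S) ^ s.card := by
    intro s S hS
    have h1 := (iIndepFun_iff_measure_inter_preimage_eq_mul.mp hindep) s
      (sets := fun _ => S) (fun i _ => hS)
    calc μ (⋂ i ∈ s, (fun ω => (Hm i ω, He i ω, Hz i ω)) ⁻¹' S)
        = ∏ i ∈ s, μ ((fun ω => (Hm i ω, He i ω, Hz i ω)) ⁻¹' S) := h1
      _ = ∏ _i ∈ s, μ ((fun ω => (Hm 0 ω, He 0 ω, Hz 0 ω)) ⁻¹' S) :=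
          Finset.prod_congr rfl fun i _ => hpre i S hS
      _ = μ ((fun ω => (Hm 0 ω, He 0 ω, Hz 0 ω)) ⁻¹' S) ^ s.card := Finset.prod_const _
  -- basic log facts
  have hLnn : ∀ i ω, 0 ≤ Real.log (1 + Pt * Hm i ω / (1 + Pj * Hz i ω)) := by
    intro i ω
    have h1 : 0 ≤ Pt * Hm i ω / (1 + Pj * Hz i ω) :=
      div_nonneg (mul_nonneg hPt.le (h0 i ω).1) (hden i ω).le
    exact Real.log_nonneg (by linarith)
  have hLε : ∀ i ω, δ ≤ Hm i ω / (1 + Pj * Hz i ω) →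
      ε ≤ Real.log (1 + Pt * Hm i ω / (1 + Pj * Hz i ω)) := by
    intro i ω h
    rw [hεdef]
    apply Real.log_le_log (by nlinarith)
    have h2 : Pt * δ ≤ Pt * (Hm i ω / (1 + Pj * Hz i ω)) :=
      mul_le_mul_of_nonneg_left h hPt.le
    rw [mul_div_assoc] at *
    linarith
  -- lower bound on partial sums from success counts
  have hWge : ∀ (n : ℕ) (ω : Ω),
      k ≤ ((Finset.range n).filter fun i => δ ≤ Hm i ω / (1 + Pj * Hz i ω)).card →
      (k : ℝ) * ε ≤ ∑ i ∈ Finset.range n,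
        Real.log (1 + Pt * Hm i ω / (1 + Pj * Hz i ω)) := by
    intro n ω hcard
    set F := (Finset.range n).filter fun i => δ ≤ Hm i ω / (1 + Pj * Hz i ω) with hF
    have h1 : (k : ℝ) ≤ (F.card : ℝ) := by exact_mod_cast hcard
    calc (k : ℝ) * ε ≤ (F.card : ℝ) * ε := by nlinarith
      _ = ∑ _i ∈ F, ε := by rw [Finset.sum_const, nsmul_eq_mul]
      _ ≤ ∑ i ∈ F, Real.log (1 + Pt * Hm i ω / (1 + Pj * Hz i ω)) :=
          Finset.sum_le_sum fun i hi => hLε i ω (Finset.mem_filter.mp hi).2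
      _ ≤ ∑ i ∈ Finset.range n, Real.log (1 + Pt * Hm i ω / (1 + Pj * Hz i ω)) :=
          Finset.sum_le_sum_of_subset_of_nonneg (Finset.filter_subset _ _)
            fun i _ _ => hLnn i ω
  -- the bad (few-successes) sets
  set D : ℕ → Set Ω := fun n =>
    {ω | ((Finset.range n).filter fun i => δ ≤ Hm i ω / (1 + Pj * Hz i ω)).card < k}
    with hDdef
  have hDmeas : ∀ n, MeasurableSet (D n) := by
    intro n
    have hcount : Measurable fun ω =>
        ((Finset.range n).filter fun i => δ ≤ Hm i ω / (1 + Pj * Hz i ω)).card := by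
      have heq : (fun ω =>
          ((Finset.range n).filter fun i => δ ≤ Hm i ω / (1 + Pj * Hz i ω)).card)
          = fun ω => ∑ i ∈ Finset.range n,
              if δ ≤ Hm i ω / (1 + Pj * Hz i ω) then 1 else 0 := by
        funext ω; rw [Finset.card_filter]
      rw [heq]
      exact Finset.measurable_sum _ fun i _ =>
        Measurable.ite (measurableSet_le measurable_const
          ((hHm i).div (measurable_const.add (measurable_const.mul (hHz i)))))
          measurable_const measurable_const
    exact hcount measurableSet_Iio
  -- T > n implies being in D n (for n ≥ 1)
  have hTD : ∀ n : ℕ, 1 ≤ n → ∀ ω, n < T ω → ω ∈ D n := by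
    intro n hn ω hωT
    rw [hDdef]
    simp only [Set.mem_setOf_eq]
    by_contra hnot
    push_neg at hnot
    have hmem : n ∈ {t : ℕ | 1 ≤ t ∧ (k : ℝ) * ε ≤ ∑ i ∈ Finset.range t,
        Real.log (1 + Pt * Hm i ω / (1 + Pj * Hz i ω))} := ⟨hn, hWge n ω hnot⟩
    have hle : T ω ≤ n := by rw [hTdef ω]; exact Nat.sInf_le hmem
    omega
  -- failure probability
  set rr := μ ((fun ω => (Hm 0 ω, He 0 ω, Hz 0 ω)) ⁻¹' SAᶜ) with hrrdef
  have hqA : 0 < μ ((fun ω => (Hm 0 ω, He 0 ω, Hz 0 ω)) ⁻¹' SA) := by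
    have : ((fun ω => (Hm 0 ω, He 0 ω, Hz 0 ω)) ⁻¹' SA)
        = {ω | δ ≤ Hm 0 ω / (1 + Pj * Hz 0 ω)} := by
      rw [hSAdef]; rfl
    rw [this]; exact hq
  have hrr1 : rr ≤ 1 := prob_le_one
  have hrrlt : rr < 1 := by
    rw [hrrdef, Set.preimage_compl, prob_compl_eq_one_sub (hmeas 0 hSA)]
    exact ENNReal.sub_lt_self ENNReal.one_ne_top one_ne_zero hqA.ne'
  -- measure of the bad sets
  have hDbound : ∀ n, μ (D n) ≤ (k : ℝ≥0∞) * rr ^ (n / k) := by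
    intro n
    set m := n / k with hm
    have hincl : D n ⊆ ⋃ j ∈ Finset.range k, ⋂ i ∈ Finset.Ico (j * m) (j * m + m),
        (fun ω => (Hm i ω, He i ω, Hz i ω)) ⁻¹' SAᶜ := by
      intro ω hω
      by_contra hnot
      have hex : ∀ j : ℕ, ∃ i : ℕ, j < k →
          (j * m ≤ i ∧ i < j * m + m) ∧ δ ≤ Hm i ω / (1 + Pj * Hz i ω) := by
        intro j
        by_cases hj : j < k
        · have h1 : ω ∉ ⋂ i ∈ Finset.Ico (j * m) (j * m + m),
              (fun ω => (Hm i ω, He i ω, Hz i ω)) ⁻¹' SAᶜ := by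
            intro hcontra
            exact hnot (Set.mem_iUnion₂.mpr ⟨j, Finset.mem_range.mpr hj, hcontra⟩)
          simp only [Set.mem_iInter, Set.mem_preimage, Set.mem_compl_iff, not_forall,
            not_not] at h1
          obtain ⟨i, hi1, hi2⟩ := h1
          refine ⟨i, fun _ => ⟨Finset.mem_Ico.mp hi1, ?_⟩⟩
          rw [hSAdef] at hi2
          exact hi2
        · exact ⟨0, fun h => absurd h hj⟩
      choose g hg using hex
      have hmaps : ∀ j ∈ Finset.range k,
          g j ∈ (Finset.range n).filter fun i => δ ≤ Hm i ω / (1 + Pj * Hz i ω) := by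
        intro j hj
        obtain ⟨⟨hlo, hhi⟩, hδi⟩ := hg j (Finset.mem_range.mp hj)
        refine Finset.mem_filter.mpr ⟨Finset.mem_range.mpr ?_, hδi⟩
        have h1 : j * m + m ≤ k * m := by
          have h2 : j + 1 ≤ k := Finset.mem_range.mp hj
          calc j * m + m = (j + 1) * m := by ring
            _ ≤ k * m := Nat.mul_le_mul_right m h2
        have h2 : k * m ≤ n := Nat.mul_div_le n k
        omega
      have hinj : Set.InjOn g (Finset.range k) := by
        intro j1 hj1 j2 hj2 heq
        simp only [Finset.coe_range, Set.mem_Iio] at hj1 hj2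
        obtain ⟨⟨hlo1, hhi1⟩, _⟩ := hg j1 hj1
        obtain ⟨⟨hlo2, hhi2⟩, _⟩ := hg j2 hj2
        have e1 : g j1 / m = j1 :=
          Nat.div_eq_of_lt_le hlo1 (by rw [Nat.succ_mul]; omega)
        have e2 : g j2 / m = j2 :=
          Nat.div_eq_of_lt_le hlo2 (by rw [Nat.succ_mul]; omega)
        rw [← e1, ← e2, heq]
      have hcard := Finset.card_le_card_of_injOn g hmaps hinj
      rw [Finset.card_range] at hcard
      rw [hDdef] at hω
      simp only [Set.mem_setOf_eq] at hω
      omega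
    calc μ (D n) ≤ μ (⋃ j ∈ Finset.range k, ⋂ i ∈ Finset.Ico (j * m) (j * m + m),
          (fun ω => (Hm i ω, He i ω, Hz i ω)) ⁻¹' SAᶜ) := measure_mono hincl
      _ ≤ ∑ j ∈ Finset.range k, μ (⋂ i ∈ Finset.Ico (j * m) (j * m + m),
          (fun ω => (Hm i ω, He i ω, Hz i ω)) ⁻¹' SAᶜ) := measure_biUnion_finset_le _ _
      _ = ∑ _j ∈ Finset.range k, rr ^ m := by
          refine Finset.sum_congr rfl fun j _ => ?_
          rw [hprod (Finset.Ico (j * m) (j * m + m)) SAᶜ hSA.compl, Nat.card_Ico,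
            Nat.add_sub_cancel_left, hrrdef]
      _ = (k : ℝ≥0∞) * rr ^ m := by
          rw [Finset.sum_const, Finset.card_range, nsmul_eq_mul]
  -- pointwise bound on T
  have hpoint : ∀ ω, (T ω : ℝ≥0∞) ≤
      1 + ∑' n, (D (n + 1)).indicator (fun _ => (1 : ℝ≥0∞)) ω := by
    intro ω
    rcases Nat.eq_zero_or_pos (T ω) with h | h
    · simp [h]
    · obtain ⟨t, ht⟩ : ∃ t, T ω = t + 1 := ⟨T ω - 1, by omega⟩
      have hsum : (t : ℝ≥0∞) ≤ ∑' n, (D (n + 1)).indicator (fun _ => (1 : ℝ≥0∞)) ω := by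
        have hone : ∀ x ∈ Finset.range t,
            (D (x + 1)).indicator (fun _ => (1 : ℝ≥0∞)) ω = 1 := by
          intro x hx
          have hx' : x < t := Finset.mem_range.mp hx
          have hmem : ω ∈ D (x + 1) :=
            hTD (x + 1) (Nat.succ_le_succ (Nat.zero_le x)) ω (by omega)
          rw [Set.indicator_of_mem hmem]
        calc (t : ℝ≥0∞)
            = ∑ x ∈ Finset.range t, (D (x + 1)).indicator (fun _ => (1 : ℝ≥0∞)) ω := by
              rw [Finset.sum_congr rfl hone, Finset.sum_const, Finset.card_range,
                nsmul_eq_mul, mul_one]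
          _ ≤ _ := ENNReal.sum_le_tsum _
      calc (T ω : ℝ≥0∞) = (t : ℝ≥0∞) + 1 := by rw [ht]; push_cast; ring
        _ ≤ (∑' n, (D (n + 1)).indicator (fun _ => (1 : ℝ≥0∞)) ω) + 1 :=
            add_le_add_left hsum _
        _ = 1 + ∑' n, (D (n + 1)).indicator (fun _ => (1 : ℝ≥0∞)) ω := add_comm _ _
  -- expectation bound
  have hlint : (∫⁻ ω, (T ω : ℝ≥0∞) ∂μ) ≤ 1 + ∑' n, μ (D (n + 1)) := by
    calc ∫⁻ ω, (T ω : ℝ≥0∞) ∂μ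
        ≤ ∫⁻ ω, (1 + ∑' n, (D (n + 1)).indicator (fun _ => (1 : ℝ≥0∞)) ω) ∂μ :=
          lintegral_mono hpoint
      _ = (∫⁻ _, 1 ∂μ) + ∫⁻ ω, ∑' n, (D (n + 1)).indicator (fun _ => (1 : ℝ≥0∞)) ω ∂μ :=
          lintegral_add_left measurable_const _
      _ = 1 + ∑' n, μ (D (n + 1)) := by
          rw [lintegral_one, measure_univ,
            lintegral_tsum fun n => (measurable_const.indicator (hDmeas (n + 1))).aemeasurable]
          congr 1
          exact tsum_congr fun n => lintegral_indicator_one (hDmeas (n + 1))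
  have htsum : ∑' n, μ (D (n + 1)) ≤ (k : ℝ≥0∞) * ((k : ℝ≥0∞) * (1 - rr)⁻¹) := by
    haveI : NeZero k := ⟨by omega⟩
    calc ∑' n, μ (D (n + 1)) ≤ ∑' n, (k : ℝ≥0∞) * rr ^ (n / k) := by
          apply ENNReal.tsum_le_tsum
          intro n
          calc μ (D (n + 1)) ≤ (k : ℝ≥0∞) * rr ^ ((n + 1) / k) := hDbound (n + 1)
            _ ≤ (k : ℝ≥0∞) * rr ^ (n / k) :=
                mul_le_mul_right
                  (pow_le_pow_of_le_one zero_le hrr1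
                    (Nat.div_le_div_right (Nat.le_succ n))) _
      _ = (k : ℝ≥0∞) * ∑' n, rr ^ (n / k) := ENNReal.tsum_mul_left
      _ = (k : ℝ≥0∞) * ((k : ℝ≥0∞) * (1 - rr)⁻¹) := by
          congr 1
          rw [← Equiv.tsum_eq (Nat.divModEquiv k).symm fun n => rr ^ (n / k)]
          have hval : ∀ p : ℕ × Fin k,
              rr ^ ((Nat.divModEquiv k).symm p / k) = rr ^ p.1 := by
            intro p
            congr 1
            simp only [Nat.divModEquiv_symm_apply]
            rw [Nat.add_comm, Nat.add_mul_div_right _ _ k.pos_of_neZero,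
              Nat.div_eq_of_lt p.2.isLt, Nat.zero_add]
          rw [tsum_congr hval]
          have hfin : ∀ m : ℕ, (∑' _ : Fin k, rr ^ m) = (k : ℝ≥0∞) * rr ^ m := by
            intro m
            rw [tsum_fintype, Finset.sum_const, Finset.card_univ, Fintype.card_fin,
              nsmul_eq_mul]
          calc ∑' p : ℕ × Fin k, rr ^ p.1
              = ∑' (a : ℕ) (_ : Fin k), rr ^ a := ENNReal.tsum_prod'
            _ = ∑' a : ℕ, (k : ℝ≥0∞) * rr ^ a := tsum_congr hfin
            _ = (k : ℝ≥0∞) * (1 - rr)⁻¹ := by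
                rw [ENNReal.tsum_mul_left, ENNReal.tsum_geometric]
  have part1 : (∫⁻ ω, (T ω : ℝ≥0∞) ∂μ) < ⊤ := by
    refine lt_of_le_of_lt (hlint.trans (add_le_add_right htsum 1)) ?_
    have h1 : (1 - rr)⁻¹ < ⊤ := ENNReal.inv_lt_top.mpr (tsub_pos_of_lt hrrlt)
    exact ENNReal.add_lt_top.mpr ⟨ENNReal.one_lt_top,
      ENNReal.mul_lt_top (ENNReal.natCast_lt_top k)
        (ENNReal.mul_lt_top (ENNReal.natCast_lt_top k) h1)⟩
  -- the good event
  set Ev : Set Ω := ⋂ i ∈ Finset.range k, (fun ω => (Hm i ω, He i ω, Hz i ω)) ⁻¹' SB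
    with hEvdef
  have hEvmeas : MeasurableSet Ev :=
    MeasurableSet.biInter (Set.to_countable _) fun i _ => hmeas i hSB
  have hEvμ : 0 < μ Ev := by
    rw [hEvdef, hprod (Finset.range k) SB hSB, Finset.card_range]
    refine ENNReal.pow_pos ?_ k
    have heq : ((fun ω => (Hm 0 ω, He 0 ω, Hz 0 ω)) ⁻¹' SB)
        = {ω | δ ≤ Hm 0 ω / (1 + Pj * Hz 0 ω) ∧ He 0 ω ≤ c} := by
      rw [hSBdef]; rfl
    rw [heq]; exact hp
  have hmemi : ∀ ω, ω ∈ Ev → ∀ i, i < k →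
      δ ≤ Hm i ω / (1 + Pj * Hz i ω) ∧ He i ω ≤ c := by
    intro ω hω i hi
    rw [hEvdef] at hω
    have h1 := Set.mem_iInter₂.mp hω i (Finset.mem_range.mpr hi)
    rw [Set.mem_preimage, hSBdef] at h1
    exact h1
  have hEvprop : ∀ ω, ω ∈ Ev → 1 ≤ T ω ∧ T ω ≤ k := by
    intro ω hω
    have hksum : (k : ℝ) * ε ≤ ∑ i ∈ Finset.range k,
        Real.log (1 + Pt * Hm i ω / (1 + Pj * Hz i ω)) := by
      apply hWge k ω
      rw [Finset.filter_true_of_mem fun i hi => (hmemi ω hω i (Finset.mem_range.mp hi)).1,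
        Finset.card_range]
    have hkmem : k ∈ {t : ℕ | 1 ≤ t ∧ (k : ℝ) * ε ≤ ∑ i ∈ Finset.range t,
        Real.log (1 + Pt * Hm i ω / (1 + Pj * Hz i ω))} := ⟨hk1, hksum⟩
    constructor
    · rw [hTdef ω]
      have hne : {t : ℕ | 1 ≤ t ∧ (k : ℝ) * ε ≤ ∑ i ∈ Finset.range t,
          Real.log (1 + Pt * Hm i ω / (1 + Pj * Hz i ω))}.Nonempty := ⟨k, hkmem⟩
      exact (Nat.sInf_mem hne).1
    · rw [hTdef ω]; exact Nat.sInf_le hkmem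
  have hreward : ∀ ω, ω ∈ Ev →
      0 < max ((k : ℝ) * ε - Real.log (1 + Pt * ∑ i ∈ Finset.range (T ω), He i ω)) 0 := by
    intro ω hω
    obtain ⟨h1T, hTk⟩ := hEvprop ω hω
    have hSnn : 0 ≤ ∑ i ∈ Finset.range (T ω), He i ω :=
      Finset.sum_nonneg fun i _ => (h0 i ω).2.1
    have hsum : ∑ i ∈ Finset.range (T ω), He i ω ≤ (k : ℝ) * c := by
      calc ∑ i ∈ Finset.range (T ω), He i ω ≤ ∑ i ∈ Finset.range k, He i ω :=
            Finset.sum_le_sum_of_subset_of_nonneg (Finset.range_subset_range.mpr hTk)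
              fun i _ _ => (h0 i ω).2.1
        _ ≤ ∑ i ∈ Finset.range k, c :=
            Finset.sum_le_sum fun i hi => (hmemi ω hω i (Finset.mem_range.mp hi)).2
        _ = (k : ℝ) * c := by rw [Finset.sum_const, Finset.card_range, nsmul_eq_mul]
    have hlog : Real.log (1 + Pt * ∑ i ∈ Finset.range (T ω), He i ω)
        ≤ Real.log (1 + Pt * ((k : ℝ) * c)) := by
      apply Real.log_le_log (by nlinarith)
      nlinarith
    have hpos' : 0 < (k : ℝ) * ε
        - Real.log (1 + Pt * ∑ i ∈ Finset.range (T ω), He i ω) := by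
      have := lt_of_le_of_lt hlog hklog
      linarith
    exact lt_of_lt_of_le hpos' (le_max_left _ _)
  -- measurability of T and of the reward
  have hWmeas : ∀ t : ℕ, Measurable fun ω => ∑ i ∈ Finset.range t,
      Real.log (1 + Pt * Hm i ω / (1 + Pj * Hz i ω)) :=
    fun t => Finset.measurable_sum _ fun i _ =>
      Real.measurable_log.comp (measurable_const.add
        ((measurable_const.mul (hHm i)).div
          (measurable_const.add (measurable_const.mul (hHz i)))))
  have hTmeas : Measurable T := by
    have hE : ∀ t : ℕ, MeasurableSet {ω : Ω | 1 ≤ t ∧ (k : ℝ) * ε ≤ ∑ i ∈ Finset.range t,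
        Real.log (1 + Pt * Hm i ω / (1 + Pj * Hz i ω))} := by
      intro t
      by_cases ht : 1 ≤ t
      · have heq : {ω : Ω | 1 ≤ t ∧ (k : ℝ) * ε ≤ ∑ i ∈ Finset.range t,
            Real.log (1 + Pt * Hm i ω / (1 + Pj * Hz i ω))}
            = {ω : Ω | (k : ℝ) * ε ≤ ∑ i ∈ Finset.range t,
              Real.log (1 + Pt * Hm i ω / (1 + Pj * Hz i ω))} := by
          ext ω; simp [ht]
        rw [heq]
        exact measurableSet_le measurable_const (hWmeas t)
      · have heq : {ω : Ω | 1 ≤ t ∧ (k : ℝ) * ε ≤ ∑ i ∈ Finset.range t,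
            Real.log (1 + Pt * Hm i ω / (1 + Pj * Hz i ω))} = ∅ := by
          ext ω; simp [ht]
        rw [heq]
        exact MeasurableSet.empty
    have h1 := aux_measurable_sInf _ hE
    have heq : T = fun ω => sInf {t : ℕ | ω ∈ {ω' : Ω | 1 ≤ t ∧
        (k : ℝ) * ε ≤ ∑ i ∈ Finset.range t,
          Real.log (1 + Pt * Hm i ω' / (1 + Pj * Hz i ω'))}} := by
      funext ω
      rw [hTdef ω]
      rfl
    rw [heq]
    exact h1
  have hsummeas : Measurable fun ω => ∑ i ∈ Finset.range (T ω), He i ω :=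
    aux_measurable_apply hTmeas fun n => Finset.measurable_sum _ fun i _ => hHe i
  have hfmeas : Measurable fun ω =>
      max ((k : ℝ) * ε - Real.log (1 + Pt * ∑ i ∈ Finset.range (T ω), He i ω)) 0 :=
    (measurable_const.sub (Real.measurable_log.comp
      (measurable_const.add (measurable_const.mul hsummeas)))).max measurable_const
  have hfnn : ∀ ω, 0 ≤ max ((k : ℝ) * ε
      - Real.log (1 + Pt * ∑ i ∈ Finset.range (T ω), He i ω)) 0 :=
    fun ω => le_max_right _ _
  have hfbd : ∀ ω, max ((k : ℝ) * ε
      - Real.log (1 + Pt * ∑ i ∈ Finset.range (T ω), He i ω)) 0 ≤ (k : ℝ) * ε := by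
    intro ω
    have hSnn : 0 ≤ ∑ i ∈ Finset.range (T ω), He i ω :=
      Finset.sum_nonneg fun i _ => (h0 i ω).2.1
    have hlognn : 0 ≤ Real.log (1 + Pt * ∑ i ∈ Finset.range (T ω), He i ω) :=
      Real.log_nonneg (by nlinarith)
    apply max_le (by linarith)
    positivity
  have hfint : Integrable (fun ω =>
      max ((k : ℝ) * ε - Real.log (1 + Pt * ∑ i ∈ Finset.range (T ω), He i ω)) 0) μ := by
    refine Integrable.mono' (integrable_const ((k : ℝ) * ε)) hfmeas.aestronglyMeasurable
      (Filter.Eventually.of_forall fun ω => ?_)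
    rw [Real.norm_of_nonneg (hfnn ω)]
    exact hfbd ω
  have part2 : 0 < ∫ ω,
      max ((k : ℝ) * ε - Real.log (1 + Pt * ∑ i ∈ Finset.range (T ω), He i ω)) 0 ∂μ := by
    rw [integral_pos_iff_support_of_nonneg hfnn hfint]
    refine lt_of_lt_of_le hEvμ (measure_mono ?_)
    intro ω hω
    exact (hreward ω hω).ne'
  refine ⟨part1, part2, ?_⟩
  have hlpos : 0 < ∫⁻ ω, (T ω : ℝ≥0∞) ∂μ := by
    have hle : ∀ ω, Ev.indicator (fun _ => (1 : ℝ≥0∞)) ω ≤ (T ω : ℝ≥0∞) := by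
      intro ω
      by_cases hω : ω ∈ Ev
      · rw [Set.indicator_of_mem hω]
        exact_mod_cast (hEvprop ω hω).1
      · rw [Set.indicator_of_notMem hω]
        exact zero_le
    calc (0 : ℝ≥0∞) < μ Ev := hEvμ
      _ = ∫⁻ ω, Ev.indicator (fun _ => (1 : ℝ≥0∞)) ω ∂μ :=
          (lintegral_indicator_one hEvmeas).symm
      _ ≤ _ := lintegral_mono hle
  exact div_pos part2 (ENNReal.toReal_pos hlpos.ne' part1.ne)
end
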